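/- arXiv:2008.06406 — 5 statements merged into one kernel-verified Lean document; each statement's English description precedes it below -/
import Mathlib

section
/- Let ω be an affine permutation of size N with N ≥ k. Then ω avoids the decreasing pattern (k+1)k⋯21 if and only if [N] can be partitioned into k nonempty sets G_1, …, G_k such that for each i, writing G_i = {g_{i,1} < g_{i,2} < ⋯ < g_{i,n_i}}, one has ω(g_{i,1}) < ω(g_{i,2}) < ⋯ < ω(g_{i,n_i}) < ω(g_{i,1} + N). -/
/-- An affine permutation of size `N`. -/
def IsAffinePerm (N : ℕ) (σ : ℤ → ℤ) : Prop :=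
  Function.Bijective σ ∧ (∀ i : ℤ, σ (i + N) = σ i + N) ∧
    ∑ i ∈ Finset.Icc (1 : ℤ) N, σ i = ∑ i ∈ Finset.Icc (1 : ℤ) N, i

/-- `ω` avoids the decreasing pattern `(k+1)k⋯21` of size `k+1`. -/
def AvoidsDec (k : ℕ) (ω : ℤ → ℤ) : Prop :=
  ¬ ∃ a : Fin (k + 1) → ℤ, StrictMono a ∧ StrictAnti (fun j => ω (a j))

namespace Stmt2Aux



/-- Set of `m` such that there is a decreasing chain of length `m+1` ending at `x`. -/
def chainSet (ω : ℤ → ℤ) (x : ℤ) : Set ℕ :=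
  {m | ∃ a : Fin (m + 1) → ℤ, StrictMono a ∧ StrictAnti (fun j => ω (a j)) ∧ a (Fin.last m) = x}

noncomputable def ht (ω : ℤ → ℤ) (x : ℤ) : ℕ := sSup (chainSet ω x)

lemma zero_mem_chainSet (ω : ℤ → ℤ) (x : ℤ) : 0 ∈ chainSet ω x := by
  haveI : Subsingleton (Fin (0 + 1)) := by
    constructor; intro i j; ext; omega
  exact ⟨fun _ => x, Subsingleton.strictMono _, Subsingleton.strictAnti _, rfl⟩

lemma chainSet_bdd {k : ℕ} {ω : ℤ → ℤ} (hav : ¬ ∃ a : Fin (k + 1) → ℤ,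
    StrictMono a ∧ StrictAnti (fun j => ω (a j))) {x : ℤ} {m : ℕ}
    (hm : m ∈ chainSet ω x) : m + 1 ≤ k := by
  by_contra hcon
  push_neg at hcon
  obtain ⟨a, ha1, ha2, _⟩ := hm
  have hle : k + 1 ≤ m + 1 := hcon
  exact hav ⟨a ∘ Fin.castLE hle, ha1.comp (Fin.strictMono_castLE hle),
    ha2.comp_strictMono (Fin.strictMono_castLE hle)⟩

lemma ht_mem {k : ℕ} {ω : ℤ → ℤ} (hav : ¬ ∃ a : Fin (k + 1) → ℤ,
    StrictMono a ∧ StrictAnti (fun j => ω (a j))) (x : ℤ) : ht ω x ∈ chainSet ω x :=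
  Nat.sSup_mem ⟨0, zero_mem_chainSet ω x⟩ ⟨k, fun _ hm => le_of_lt (chainSet_bdd hav hm)⟩

lemma le_ht {k : ℕ} {ω : ℤ → ℤ} (hav : ¬ ∃ a : Fin (k + 1) → ℤ,
    StrictMono a ∧ StrictAnti (fun j => ω (a j))) {x : ℤ} {m : ℕ}
    (hm : m ∈ chainSet ω x) : m ≤ ht ω x :=
  le_csSup ⟨k, fun _ hm => le_of_lt (chainSet_bdd hav hm)⟩ hm

lemma ht_lt_k {k : ℕ} {ω : ℤ → ℤ} (hav : ¬ ∃ a : Fin (k + 1) → ℤ,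
    StrictMono a ∧ StrictAnti (fun j => ω (a j))) (x : ℤ) : ht ω x + 1 ≤ k :=
  chainSet_bdd hav (ht_mem hav x)

lemma snoc_strictMono {n : ℕ} {a : Fin (n + 1) → ℤ} {y : ℤ} (ha : StrictMono a)
    (hy : a (Fin.last n) < y) : StrictMono (Fin.snoc a y : Fin (n + 2) → ℤ) := by
  intro i j hij
  rcases Fin.eq_castSucc_or_eq_last j with ⟨j', rfl⟩ | rfl
  · have hi : i < Fin.last (n + 1) := lt_of_lt_of_le hij (Fin.le_last _)
    obtain ⟨i', rfl⟩ := Fin.eq_castSucc_or_eq_last i |>.resolve_right (by rintro rfl; exact absurd hi (lt_irrefl _))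
    rw [Fin.snoc_castSucc, Fin.snoc_castSucc]
    exact ha (by exact_mod_cast hij)
  · obtain ⟨i', rfl⟩ := Fin.eq_castSucc_or_eq_last i |>.resolve_right (by rintro rfl; exact absurd hij (lt_irrefl _))
    rw [Fin.snoc_castSucc, Fin.snoc_last]
    exact lt_of_le_of_lt (ha.monotone (Fin.le_last i')) hy

lemma snoc_strictAnti {n : ℕ} {a : Fin (n + 1) → ℤ} {y : ℤ} (ha : StrictAnti a)
    (hy : y < a (Fin.last n)) : StrictAnti (Fin.snoc a y : Fin (n + 2) → ℤ) := by
  intro i j hij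
  rcases Fin.eq_castSucc_or_eq_last j with ⟨j', rfl⟩ | rfl
  · have hi : i < Fin.last (n + 1) := lt_of_lt_of_le hij (Fin.le_last _)
    obtain ⟨i', rfl⟩ := Fin.eq_castSucc_or_eq_last i |>.resolve_right (by rintro rfl; exact absurd hi (lt_irrefl _))
    rw [Fin.snoc_castSucc, Fin.snoc_castSucc]
    exact ha (by exact_mod_cast hij)
  · obtain ⟨i', rfl⟩ := Fin.eq_castSucc_or_eq_last i |>.resolve_right (by rintro rfl; exact absurd hij (lt_irrefl _))
    rw [Fin.snoc_castSucc, Fin.snoc_last]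
    exact lt_of_lt_of_le hy (ha.antitone (Fin.le_last i'))

/-- `x ≺ y` increases height. -/
lemma ht_lt_of_prec {k : ℕ} {ω : ℤ → ℤ} (hav : ¬ ∃ a : Fin (k + 1) → ℤ,
    StrictMono a ∧ StrictAnti (fun j => ω (a j))) {x y : ℤ} (hxy : x < y)
    (hωxy : ω y < ω x) : ht ω x < ht ω y := by
  obtain ⟨a, ha1, ha2, ha3⟩ := ht_mem hav x
  have hmem : ht ω x + 1 ∈ chainSet ω y := by
    refine ⟨Fin.snoc a y, snoc_strictMono ha1 (by rw [ha3]; exact hxy), ?_, Fin.snoc_last _ _⟩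
    have : (fun j => ω ((Fin.snoc a y : Fin (ht ω x + 2) → ℤ) j)) =
        Fin.snoc (fun j => ω (a j)) (ω y) := by
      rw [show (fun j => ω ((Fin.snoc a y : Fin (ht ω x + 2) → ℤ) j)) = ω ∘ Fin.snoc a y from rfl,
        Fin.comp_snoc]; rfl
    rw [this]
    exact snoc_strictAnti ha2 (by simpa [ha3] using hωxy)
  exact lt_of_lt_of_le (Nat.lt_succ_self _) (le_ht hav hmem)


lemma shift_mul {N : ℕ} {ω : ℤ → ℤ} (hper : ∀ i : ℤ, ω (i + N) = ω i + N) (m i : ℤ) :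
    ω (i + N * m) = ω i + N * m := by
  induction m using Int.induction_on with
  | zero => simp
  | succ n ih =>
      have : i + N * (n + 1) = (i + N * n) + N := by ring
      rw [this, hper, ih]; ring
  | pred n ih =>
      have h1 : (i + N * (-n - 1)) + N = i + N * (-n) := by ring
      have := hper (i + N * (-n - 1))
      rw [h1, ih] at this
      omega

lemma chainSet_shift {N : ℕ} {ω : ℤ → ℤ} (hper : ∀ i : ℤ, ω (i + N) = ω i + N) (x m : ℤ) :
    chainSet ω x ⊆ chainSet ω (x + N * m) := by
  rintro n ⟨a, ha1, ha2, ha3⟩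
  refine ⟨fun j => a j + N * m, fun i j hij => by simp only; have := ha1 hij; omega,
    ?_, by simp only [ha3]⟩
  intro i j hij
  simp only [shift_mul hper]
  have := ha2 hij
  simp only at this
  omega

lemma ht_shift {N : ℕ} {ω : ℤ → ℤ} (hper : ∀ i : ℤ, ω (i + N) = ω i + N) (x m : ℤ) :
    ht ω (x + N * m) = ht ω x := by
  have h1 := chainSet_shift hper x m
  have h2 := chainSet_shift hper (x + N * m) (-m)
  have : x + N * m + N * (-m) = x := by ring
  rw [this] at h2
  unfold ht
  rw [Set.Subset.antisymm h2 h1]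

def resid (N : ℕ) (x : ℤ) : ℤ := (x - 1) % N + 1
def quot (N : ℕ) (x : ℤ) : ℤ := (x - 1) / N

lemma resid_spec (N : ℕ) (x : ℤ) : resid N x + N * quot N x = x := by
  have := Int.emod_add_mul_ediv (x - 1) N
  unfold resid quot; omega

lemma resid_mem {N : ℕ} (hN : 0 < N) (x : ℤ) : resid N x ∈ Finset.Icc (1 : ℤ) N := by
  have h1 : (0 : ℤ) ≤ (x - 1) % N := Int.emod_nonneg _ (by exact_mod_cast hN.ne')
  have h2 : (x - 1) % N < N := Int.emod_lt_of_pos _ (by exact_mod_cast hN)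
  simp only [Finset.mem_Icc, resid]; omega

/-- If some element has positive height, some element has height one less. -/
lemma ht_step_down {k : ℕ} {ω : ℤ → ℤ} (hav : ¬ ∃ a : Fin (k + 1) → ℤ,
    StrictMono a ∧ StrictAnti (fun j => ω (a j))) {x : ℤ} {t : ℕ}
    (hx : ht ω x = t + 1) : ∃ z, ht ω z = t := by
  obtain ⟨a, ha1, ha2, ha3⟩ : t + 1 ∈ chainSet ω x := hx ▸ ht_mem hav x
  refine ⟨a (Fin.castSucc (Fin.last t)), le_antisymm ?_ ?_⟩
  · have hlt : ht ω (a (Fin.castSucc (Fin.last t))) < ht ω x :=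
      ht_lt_of_prec hav (ha3 ▸ ha1 (Fin.castSucc_lt_last _))
        (ha3 ▸ ha2 (Fin.castSucc_lt_last _))
    omega
  · refine le_ht hav ⟨fun j => a (Fin.castSucc j), ha1.comp Fin.strictMono_castSucc, ?_, rfl⟩
    exact ha2.comp_strictMono Fin.strictMono_castSucc

lemma exists_ht_eq {k : ℕ} {ω : ℤ → ℤ} (hav : ¬ ∃ a : Fin (k + 1) → ℤ,
    StrictMono a ∧ StrictAnti (fun j => ω (a j))) {t : ℕ} :
    ∀ n : ℕ, ∀ x : ℤ, ht ω x = t + n → ∃ z, ht ω z = t := by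
  intro n
  induction n with
  | zero => exact fun x hx => ⟨x, hx⟩
  | succ n ih =>
      intro x hx
      obtain ⟨z, hz⟩ := ht_step_down hav (x := x) (t := t + n) (by omega)
      exact ih z hz

lemma exists_ht_le {k : ℕ} {ω : ℤ → ℤ} (hav : ¬ ∃ a : Fin (k + 1) → ℤ,
    StrictMono a ∧ StrictAnti (fun j => ω (a j))) {t : ℕ} {x : ℤ}
    (h : t ≤ ht ω x) : ∃ z, ht ω z = t := by
  obtain ⟨n, hn⟩ := Nat.exists_eq_add_of_le h
  exact exists_ht_eq hav n x hn

/-- There is an element of any height `≤ ht ω x` inside `[1, N]`. -/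
lemma exists_ht_le_mem {N k : ℕ} {ω : ℤ → ℤ} (hN : 0 < N)
    (hper : ∀ i : ℤ, ω (i + N) = ω i + N)
    (hav : ¬ ∃ a : Fin (k + 1) → ℤ, StrictMono a ∧ StrictAnti (fun j => ω (a j)))
    {t : ℕ} {x : ℤ} (h : t ≤ ht ω x) :
    ∃ z ∈ Finset.Icc (1 : ℤ) N, ht ω z = t := by
  obtain ⟨z, hz⟩ := exists_ht_le hav h
  refine ⟨resid N z, resid_mem hN z, ?_⟩
  have := ht_shift hper (resid N z) (quot N z)
  rw [resid_spec N z] at this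
  omega

noncomputable def skey (ω : ℤ → ℤ) (x : ℤ) : ℕ ×ₗ ℤ := toLex (ht ω x, x)

def srel (ω : ℤ → ℤ) (x y : ℤ) : Prop := skey ω x ≤ skey ω y

noncomputable instance (ω : ℤ → ℤ) : DecidableRel (srel ω) := fun _ _ => Classical.dec _

instance (ω : ℤ → ℤ) : IsTrans ℤ (srel ω) := ⟨fun _ _ _ => le_trans⟩
instance (ω : ℤ → ℤ) : IsTotal ℤ (srel ω) := ⟨fun _ _ => le_total _ _⟩
instance (ω : ℤ → ℤ) : IsAntisymm ℤ (srel ω) :=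
  ⟨fun a b h1 h2 => congrArg (fun p => (ofLex p).2) (le_antisymm h1 h2)⟩

lemma srel_ht_le {ω : ℤ → ℤ} {x y : ℤ} (h : srel ω x y) : ht ω x ≤ ht ω y := by
  rcases Prod.Lex.le_iff.mp h with h' | ⟨h', _⟩
  · exact le_of_lt h'
  · exact le_of_eq h'

lemma forward {N k : ℕ} (hk : 1 ≤ k) (hkN : k ≤ N) {ω : ℤ → ℤ}
    (hinj : Function.Injective ω) (hper : ∀ i : ℤ, ω (i + N) = ω i + N)
    (hav : ¬ ∃ a : Fin (k + 1) → ℤ, StrictMono a ∧ StrictAnti (fun j => ω (a j))) :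
    ∃ G : Fin k → Finset ℤ,
      (∀ i, (G i).Nonempty) ∧
      (Finset.univ.biUnion G = Finset.Icc (1 : ℤ) N) ∧
      (∀ i j, i ≠ j → Disjoint (G i) (G j)) ∧
      (∀ i, ∀ a ∈ G i, ∀ b ∈ G i, a < b → ω a < ω b) ∧
      (∀ i, ∀ a ∈ G i, ∀ b ∈ G i, ω a < ω (b + N)) := by
  classical
  have hN : 0 < N := lt_of_lt_of_le hk hkN
  set l := Finset.sort (Finset.Icc (1 : ℤ) N) (srel ω) with hl
  have hlen : l.length = N := by
    rw [hl, Finset.length_sort, Int.card_Icc]; omega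
  have hmeml : ∀ x : ℤ, x ∈ l ↔ x ∈ Finset.Icc (1 : ℤ) N := fun x => Finset.mem_sort _
  have hsort : l.Pairwise (srel ω) := Finset.pairwise_sort _ _
  have hnodup : l.Nodup := Finset.sort_nodup _ _
  have hidx : ∀ x ∈ Finset.Icc (1 : ℤ) N, ∃ j : Fin l.length, l.get j = x := by
    intro x hx
    exact List.mem_iff_get.mp ((hmeml x).mpr hx)
  have hgetmem : ∀ j : Fin l.length, l.get j ∈ Finset.Icc (1 : ℤ) N :=
    fun j => (hmeml _).mp (l.get_mem j)
  set H : Fin l.length → ℕ := fun j => ht ω (l.get j) with hH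
  have hHmono : ∀ j j' : Fin l.length, j ≤ j' → H j ≤ H j' := by
    intro j j' hjj
    rcases eq_or_lt_of_le hjj with h | h
    · rw [h]
    · exact srel_ht_le (hsort.rel_get_of_lt h)
  have hHk : ∀ j, H j + 1 ≤ k := fun j => ht_lt_k hav _
  set c : Fin l.length → ℕ := fun j => max (H j) (j.val + k - l.length) with hc
  have hck : ∀ j, c j < k := by
    intro j
    have h1 := hHk j
    have h2 := j.isLt
    simp only [hc]
    omega
  -- every height `t` that is `≤` some attained height has an index
  have hfind : ∀ (t : ℕ) (j : Fin l.length), t ≤ H j → ∃ j' : Fin l.length, H j' = t := by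
    intro t j htj
    obtain ⟨z, hz1, hz2⟩ := exists_ht_le_mem (k := k) hN hper hav htj
    obtain ⟨j', hj'⟩ := hidx z hz1
    exact ⟨j', by show ht ω (l.get j') = t; rw [hj', hz2]⟩
  have hpos : 0 < l.length := by omega
  -- c at index 0 is 0
  have hc0 : c ⟨0, hpos⟩ = 0 := by
    obtain ⟨j', hj'⟩ := hfind 0 ⟨0, hpos⟩ (Nat.zero_le _)
    have h0 : H ⟨0, hpos⟩ ≤ H j' := hHmono _ _ (by simp [Fin.le_def])
    simp only [hc]
    omega
  -- c at the last index is k - 1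
  have hclast : c ⟨l.length - 1, by omega⟩ = k - 1 := by
    have h1 := hHk ⟨l.length - 1, by omega⟩
    simp only [hc]
    omega
  -- consecutive heights differ by at most one
  have hHstep : ∀ (v : ℕ) (h1 : v + 1 < l.length),
      H ⟨v + 1, h1⟩ ≤ H ⟨v, by omega⟩ + 1 := by
    intro v h1
    by_contra hcon
    push_neg at hcon
    obtain ⟨j'', hj''⟩ := hfind (H ⟨v, by omega⟩ + 1) ⟨v + 1, h1⟩ (by omega)
    rcases le_or_gt j'' ⟨v, by omega⟩ with h | h
    · have := hHmono _ _ h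
      omega
    · have : (⟨v + 1, h1⟩ : Fin l.length) ≤ j'' := h
      have := hHmono _ _ this
      omega
  have hcstep : ∀ (j j' : Fin l.length), j'.val = j.val + 1 → c j' ≤ c j + 1 := by
    intro j j' he
    have h1 : j.val + 1 < l.length := he ▸ j'.isLt
    have h2 : H j' ≤ H j + 1 := by
      have := hHstep j.val h1
      have hj'eq : j' = ⟨j.val + 1, h1⟩ := Fin.ext he
      rw [hj'eq]
      exact this
    simp only [hc, he]
    omega
  -- surjectivity of c onto {0, ..., k-1}
  have hsurj : ∀ i : ℕ, i < k → ∃ j, c j = i := by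
    intro i hi
    set T : Finset (Fin l.length) := Finset.univ.filter (fun j => i ≤ c j) with hT
    have hTne : T.Nonempty := by
      refine ⟨⟨l.length - 1, by omega⟩, ?_⟩
      simp only [hT, Finset.mem_filter, Finset.mem_univ, true_and, hclast]
      omega
    set j0 := T.min' hTne with hj0
    have hj0T : j0 ∈ T := T.min'_mem hTne
    have hij0 : i ≤ c j0 := by
      simp only [hT, Finset.mem_filter] at hj0T; exact hj0T.2
    rcases Nat.eq_zero_or_eq_succ_pred j0.val with h0 | h0
    · refine ⟨j0, ?_⟩
      have : j0 = ⟨0, hpos⟩ := Fin.ext h0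
      rw [this] at hij0 ⊢
      omega
    · have hvlt : j0.val - 1 < l.length := by omega
      have hprev : (⟨j0.val - 1, hvlt⟩ : Fin l.length) ∉ T := by
        intro hmem
        have := T.min'_le _ hmem
        rw [← hj0] at this
        have : j0.val ≤ j0.val - 1 := this
        omega
      have hlt : c ⟨j0.val - 1, hvlt⟩ < i := by
        simp only [hT, Finset.mem_filter, Finset.mem_univ, true_and, not_le] at hprev
        exact hprev
      have hs := hcstep ⟨j0.val - 1, hvlt⟩ j0 (by show j0.val = j0.val - 1 + 1; omega)
      exact ⟨j0, by omega⟩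
  -- fibers of c have constant height
  have hfib : ∀ j j' : Fin l.length, c j = c j' → H j = H j' := by
    have key : ∀ j j' : Fin l.length, j.val < j'.val → c j = c j' → H j = H j' := by
      intro j j' hlt hcc
      have hm : H j ≤ H j' := hHmono _ _ (le_of_lt hlt)
      have h2 := j'.isLt
      simp only [hc] at hcc
      omega
    intro j j' hcc
    rcases lt_trichotomy j.val j'.val with h | h | h
    · exact key _ _ h hcc
    · exact congrArg H (Fin.ext h)
    · exact (key _ _ h hcc.symm).symm
  -- the blocks
  set ci : Fin l.length → Fin k := fun j => ⟨c j, hck j⟩ with hci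
  set G : Fin k → Finset ℤ :=
    fun i => (Finset.univ.filter (fun j => ci j = i)).image (fun j : Fin l.length => l.get j)
    with hG
  have hmemG : ∀ (i : Fin k) (x : ℤ), x ∈ G i ↔ ∃ j : Fin l.length, ci j = i ∧ l.get j = x := by
    intro i x
    simp only [hG, Finset.mem_image, Finset.mem_filter, Finset.mem_univ, true_and]
  -- the same-height property inside a block
  have hsame : ∀ (i : Fin k), ∀ a ∈ G i, ∀ b ∈ G i,
      a ∈ Finset.Icc (1 : ℤ) N ∧ b ∈ Finset.Icc (1 : ℤ) N ∧ ht ω a = ht ω b := by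
    intro i a ha b hb
    obtain ⟨ja, hja1, hja2⟩ := (hmemG i a).mp ha
    obtain ⟨jb, hjb1, hjb2⟩ := (hmemG i b).mp hb
    have hcc : c ja = c jb := by
      have : (ci ja).val = (ci jb).val := by rw [hja1, hjb1]
      simpa [hci] using this
    have := hfib _ _ hcc
    simp only [hH, hja2, hjb2] at this
    exact ⟨hja2 ▸ hgetmem ja, hjb2 ▸ hgetmem jb, this⟩
  refine ⟨G, ?_, ?_, ?_, ?_, ?_⟩
  · -- nonempty
    intro i
    obtain ⟨j, hj⟩ := hsurj i.val i.isLt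
    exact ⟨l.get j, (hmemG i _).mpr ⟨j, Fin.ext hj, rfl⟩⟩
  · -- union
    ext x
    simp only [Finset.mem_biUnion, Finset.mem_univ, true_and]
    constructor
    · rintro ⟨i, hi⟩
      obtain ⟨j, _, hj2⟩ := (hmemG i x).mp hi
      exact hj2 ▸ hgetmem j
    · intro hx
      obtain ⟨j, hj⟩ := hidx x hx
      exact ⟨ci j, (hmemG _ x).mpr ⟨j, rfl, hj⟩⟩
  · -- disjoint
    intro i i' hii
    rw [Finset.disjoint_left]
    intro x hxi hxi'
    obtain ⟨j, hj1, hj2⟩ := (hmemG i x).mp hxi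
    obtain ⟨j', hj'1, hj'2⟩ := (hmemG i' x).mp hxi'
    have : j = j' := (hnodup.get_inj_iff).mp (hj2.trans hj'2.symm)
    exact hii (hj1 ▸ this ▸ hj'1)
  · -- increasing within a block
    intro i a ha b hb hab
    obtain ⟨_, _, hhab⟩ := hsame i a ha b hb
    rcases lt_trichotomy (ω a) (ω b) with h | h | h
    · exact h
    · exact absurd (hinj h) (ne_of_lt hab)
    · exact absurd (ht_lt_of_prec hav hab h) (by omega)
  · -- wrap-around
    intro i a ha b hb
    obtain ⟨haI, hbI, hhab⟩ := hsame i a ha b hb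
    simp only [Finset.mem_Icc] at haI hbI
    have hlt : a < b + N := by omega
    have hhb : ht ω (b + N) = ht ω b := by
      have := ht_shift hper b 1
      simpa using this
    rcases lt_trichotomy (ω a) (ω (b + N)) with h | h | h
    · exact h
    · exact absurd (hinj h) (ne_of_lt hlt)
    · exact absurd (ht_lt_of_prec hav hlt h) (by omega)

lemma backward {N k : ℕ} (hk : 1 ≤ k) (hkN : k ≤ N) {ω : ℤ → ℤ}
    (hper : ∀ i : ℤ, ω (i + N) = ω i + N)
    (G : Fin k → Finset ℤ)
    (hcov : Finset.univ.biUnion G = Finset.Icc (1 : ℤ) N)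
    (hmono : ∀ i, ∀ a ∈ G i, ∀ b ∈ G i, a < b → ω a < ω b)
    (hwrap : ∀ i, ∀ a ∈ G i, ∀ b ∈ G i, ω a < ω (b + N)) :
    ¬ ∃ a : Fin (k + 1) → ℤ, StrictMono a ∧ StrictAnti (fun j => ω (a j)) := by
  have hN : 0 < N := lt_of_lt_of_le hk hkN
  rintro ⟨a, ha1, ha2⟩
  -- each residue lies in some block
  have hblock : ∀ j : Fin (k + 1), ∃ i : Fin k, resid N (a j) ∈ G i := by
    intro j
    have : resid N (a j) ∈ Finset.univ.biUnion G := hcov ▸ resid_mem hN (a j)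
    simpa [Finset.mem_biUnion] using this
  choose f hf using hblock
  obtain ⟨s, t, hst, hfst⟩ := Fintype.exists_ne_map_eq_of_card_lt f (by simp)
  -- wlog s < t
  have key : ∀ s t : Fin (k + 1), s < t → f s = f t → False := by
    intro s t hst hfeq
    set rs := resid N (a s) with hrs
    set rt := resid N (a t) with hrt
    set qs := quot N (a s) with hqs
    set qt := quot N (a t) with hqt
    have hes : rs + N * qs = a s := resid_spec N (a s)
    have het : rt + N * qt = a t := resid_spec N (a t)
    have hωs : ω (a s) = ω rs + N * qs := by rw [← hes, shift_mul hper]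
    have hωt : ω (a t) = ω rt + N * qt := by rw [← het, shift_mul hper]
    have hsmem : rs ∈ Finset.Icc (1 : ℤ) N := resid_mem hN _
    have htmem : rt ∈ Finset.Icc (1 : ℤ) N := resid_mem hN _
    simp only [Finset.mem_Icc] at hsmem htmem
    have hlt : a s < a t := ha1 hst
    have hgt : ω (a t) < ω (a s) := ha2 hst
    have hGs : rs ∈ G (f s) := hf s
    have hGt : rt ∈ G (f s) := hfeq ▸ hf t
    have hw1 : ω rs < ω rt + N := by
      have := hwrap (f s) rs hGs rt hGt
      rwa [hper] at this
    rcases lt_trichotomy qs qt with h | h | h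
    · have hm : (N : ℤ) * (qs + 1) ≤ N * qt := by
        apply mul_le_mul_of_nonneg_left (by omega) (by positivity)
      rw [hωs, hωt] at hgt
      have : (N:ℤ) * qs + N ≤ N * qt := by linarith [hm]
      linarith
    · have hNq : (N : ℤ) * qs = N * qt := by rw [h]
      have hrslt : rs < rt := by linarith
      have := hmono (f s) rs hGs rt hGt hrslt
      rw [hωs, hωt] at hgt
      linarith
    · have hm : (N : ℤ) * (qt + 1) ≤ N * qs := by
        apply mul_le_mul_of_nonneg_left (by omega) (by positivity)
      -- a s < a t gives rs - rt < N*(qt - qs) ≤ -N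
      have : rs + N * qs < rt + N * qt := by rw [hes, het]; exact hlt
      linarith
  rcases hst.lt_or_gt with h | h
  · exact key s t h hfst
  · exact key t s h hfst.symm

end Stmt2Aux

/-- an affine permutation of size N ≥ k avoids (k+1)⋯21 iff [N] can be
partitioned into k nonempty periodic increasing blocks. -/
theorem stmt_2 (N k : ℕ) (hk : 1 ≤ k) (hkN : k ≤ N) (ω : ℤ → ℤ)
    (hω : IsAffinePerm N ω) :
    AvoidsDec k ω ↔
      ∃ G : Fin k → Finset ℤ,
        (∀ i, (G i).Nonempty) ∧
        (Finset.univ.biUnion G = Finset.Icc (1 : ℤ) N) ∧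
        (∀ i j, i ≠ j → Disjoint (G i) (G j)) ∧
        (∀ i, ∀ a ∈ G i, ∀ b ∈ G i, a < b → ω a < ω b) ∧
        (∀ i, ∀ a ∈ G i, ∀ b ∈ G i, ω a < ω (b + N)) := by
  obtain ⟨hbij, hper, -⟩ := hω
  constructor
  · intro hav
    exact Stmt2Aux.forward hk hkN hbij.injective hper hav
  · rintro ⟨G, -, hcov, -, hmono, hwrap⟩
    exact Stmt2Aux.backward hk hkN hper G hcov hmono hwrap
end

section
/- Let ω be an affine permutation. For a ∈ ℤ, define the rank of a in ω as the maximum length r of a sequence a = a_1 < a_2 < ⋯ < a_r with ω(a_1) > ω(a_2) > ⋯ > ω(a_r). If ω avoids the decreasing pattern of size k+1, then every integer has rank between 1 and k, and integers a, a+N have equal rank, and for any two integers a < a' of the same rank arising as the starts of maximal decreasing subsequences, ω(a) < ω(a'); i.e., the integers of any fixed rank form an increasing subsequence of ω. -/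
/-- The rank of `a` in `ω`: the maximum length of a decreasing subsequence of `ω`
starting at position `a`. -/
noncomputable def rankIn (ω : ℤ → ℤ) (a : ℤ) : ℕ :=
  sSup {r : ℕ | ∃ s : Fin r → ℤ, StrictMono s ∧ (∃ h : 0 < r, s ⟨0, h⟩ = a) ∧
    StrictAnti (fun j => ω (s j))}

/-- auxiliary: the set whose sSup is `rankIn`. -/
def rset (ω : ℤ → ℤ) (a : ℤ) : Set ℕ :=
  {r : ℕ | ∃ s : Fin r → ℤ, StrictMono s ∧ (∃ h : 0 < r, s ⟨0, h⟩ = a) ∧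
    StrictAnti (fun j => ω (s j))}

lemma rankIn_eq (ω : ℤ → ℤ) (a : ℤ) : rankIn ω a = sSup (rset ω a) := rfl

lemma one_mem_rset (ω : ℤ → ℤ) (a : ℤ) : 1 ∈ rset ω a := by
  refine ⟨fun _ => a, ?_, ⟨one_pos, rfl⟩, ?_⟩ <;>
  · intro i j hij
    exact absurd (Subsingleton.elim i j ▸ hij) (lt_irrefl _)

lemma rset_le {k : ℕ} {ω : ℤ → ℤ} (hav : AvoidsDec k ω) {a : ℤ} {r : ℕ}
    (hr : r ∈ rset ω a) : r ≤ k := by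
  by_contra h
  push_neg at h
  obtain ⟨s, hs, _, hanti⟩ := hr
  exact hav ⟨fun j => s (Fin.castLE h j),
    fun i j hij => hs (by simp only [Fin.lt_def, Fin.coe_castLE]; exact hij),
    fun i j hij => hanti (by simp only [Fin.lt_def, Fin.coe_castLE]; exact hij)⟩

lemma rset_shift {N : ℕ} {ω : ℤ → ℤ} (hN : ∀ i : ℤ, ω (i + N) = ω i + N) (a : ℤ) :
    rset ω (a + N) = rset ω a := by
  ext r
  constructor
  · rintro ⟨s, hs, ⟨hpos, hs0⟩, hanti⟩
    refine ⟨fun j => s j - N, fun i j hij => by have := hs hij; dsimp only; omega,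
      ⟨hpos, show s ⟨0, hpos⟩ - N = a by omega⟩, fun i j hij => ?_⟩
    have e : ∀ x : ℤ, ω (x - N) = ω x - N := by
      intro x
      have := hN (x - N)
      simp at this
      omega
    have := hanti hij
    dsimp only at this ⊢
    rw [e, e]
    omega
  · rintro ⟨s, hs, ⟨hpos, hs0⟩, hanti⟩
    refine ⟨fun j => s j + N, fun i j hij => by have := hs hij; dsimp only; omega,
      ⟨hpos, show s ⟨0, hpos⟩ + N = a + N by omega⟩, fun i j hij => ?_⟩
    have := hanti hij
    dsimp only at this ⊢
    rw [hN, hN]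
    omega

/-- if ω avoids the decreasing pattern of size k+1, then ranks lie in [1,k],
ranks are N-periodic, and integers of a fixed rank form an increasing subsequence. -/
theorem stmt_3 (N k : ℕ) (hk : 1 ≤ k) (ω : ℤ → ℤ)
    (hω : IsAffinePerm N ω) (hav : AvoidsDec k ω) :
    (∀ a : ℤ, 1 ≤ rankIn ω a ∧ rankIn ω a ≤ k) ∧
    (∀ a : ℤ, rankIn ω (a + N) = rankIn ω a) ∧
    (∀ a a' : ℤ, rankIn ω a = rankIn ω a' → a < a' → ω a < ω a') := by
  have hN := hω.2.1
  have hinj := hω.1.1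
  have hbdd : ∀ a, BddAbove (rset ω a) := fun a => ⟨k, fun r hr => rset_le hav hr⟩
  have hne : ∀ a, (rset ω a).Nonempty := fun a => ⟨1, one_mem_rset ω a⟩
  have hmem : ∀ a, rankIn ω a ∈ rset ω a := fun a => by
    rw [rankIn_eq]; exact Nat.sSup_mem (hne a) (hbdd a)
  refine ⟨fun a => ⟨?_, ?_⟩, fun a => ?_, fun a a' hr hlt => ?_⟩
  · rw [rankIn_eq]; exact le_csSup (hbdd a) (one_mem_rset ω a)
  · rw [rankIn_eq]; exact csSup_le (hne a) (fun r hr => rset_le hav hr)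
  · rw [rankIn_eq, rankIn_eq, rset_shift hN]
  · by_contra hle
    push_neg at hle
    have hne' : ω a' ≠ ω a := fun h => absurd (hinj h) hlt.ne'
    have hωlt : ω a' < ω a := lt_of_le_of_ne hle hne'
    set r := rankIn ω a' with hrdef
    obtain ⟨s, hs, ⟨hpos, hs0⟩, hanti⟩ := hmem a'
    have halt : ∀ j : Fin r, a < s j := fun j =>
      lt_of_lt_of_le (show a < s ⟨0, hpos⟩ by rw [hs0]; exact hlt)
        (hs.monotone (by simp [Fin.le_def]))
    have hwlt : ∀ j : Fin r, ω (s j) < ω a := fun j =>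
      lt_of_le_of_lt
        (show ω (s j) ≤ ω (s ⟨0, hpos⟩) from
          hanti.antitone (show (⟨0, hpos⟩ : Fin r) ≤ j by simp [Fin.le_def]))
        (show ω (s ⟨0, hpos⟩) < ω a by rw [hs0]; exact hωlt)
    have ht : r + 1 ∈ rset ω a := by
      refine ⟨fun j => if h : j.1 = 0 then a else s ⟨j.1 - 1, by omega⟩, ?_, ?_, ?_⟩
      · intro i j hij
        have hij' : i.1 < j.1 := hij
        dsimp only
        split_ifs with h1 h2
        · omega
        · exact halt _
        · omega
        · exact hs (show (⟨i.1 - 1, _⟩ : Fin r) < ⟨j.1 - 1, _⟩ from by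
            simp [Fin.lt_def]; omega)
      · exact ⟨Nat.succ_pos r, by simp⟩
      · intro i j hij
        have hij' : i.1 < j.1 := hij
        dsimp only
        split_ifs with h1 h2
        · omega
        · omega
        · exact hwlt _
        · exact hanti (show (⟨i.1 - 1, _⟩ : Fin r) < ⟨j.1 - 1, _⟩ from by
            simp [Fin.lt_def]; omega)
    have : r + 1 ≤ rankIn ω a := by
      rw [rankIn_eq]; exact le_csSup (hbdd a) ht
    omega
end

section
/- The number of bounded affine permutations of size N equals ∑_{m=0}^{N} C(N,m) ∑_{k=0}^{m} C(m, N−k) (−1)^{N−m} a(m,k), where a(m,k) is the Eulerian-type number counting permutations of size m with exactly k excedances. -/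
/-- A bounded affine permutation of size `N`. -/
def IsBoundedAffinePerm (N : ℕ) (σ : ℤ → ℤ) : Prop :=
  Function.Bijective σ ∧ (∀ i : ℤ, σ (i + N) = σ i + N) ∧
    (∑ i ∈ Finset.Icc (1 : ℤ) N, σ i = ∑ i ∈ Finset.Icc (1 : ℤ) N, i) ∧
    ∀ i : ℤ, |σ i - i| < N

/-- `eulerianExc m k` = number of permutations of `[m]` with exactly `k` excedances. -/
def eulerianExc (m k : ℕ) : ℕ :=
  ((Finset.univ : Finset (Equiv.Perm (Fin m))).filter
    (fun π => ((Finset.univ : Finset (Fin m)).filter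
      (fun i => i.1 < (π i).1)).card = k)).card


open Finset

/-- Finite difference of binomials. -/
lemma Gsum (M : ℕ) : ∀ j s : ℕ,
    (∑ t ∈ range (M+1), (-1:ℤ)^t * (M.choose t : ℤ) * ((t+j).choose s : ℤ))
      = (-1:ℤ)^M * (if M ≤ s then (j.choose (s - M) : ℤ) else 0) := by
  induction M with
  | zero => intro j s; simp
  | succ M ih =>
    intro j s
    have step : (∑ t ∈ range (M+2), (-1:ℤ)^t * ((M+1).choose t : ℤ) * ((t+j).choose s : ℤ))
        = (∑ t ∈ range (M+1), (-1:ℤ)^t * (M.choose t : ℤ) * ((t+j).choose s : ℤ))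
          - (∑ t ∈ range (M+1), (-1:ℤ)^t * (M.choose t : ℤ) * ((t+(j+1)).choose s : ℤ)) := by
      rw [Finset.sum_range_succ' (fun t => (-1:ℤ)^t * ((M+1).choose t : ℤ) * ((t+j).choose s : ℤ)) (M+1)]
      have e1 : ∀ t, ((M+1).choose (t+1) : ℤ) = (M.choose t : ℤ) + (M.choose (t+1) : ℤ) := by
        intro t; rw [Nat.choose_succ_succ]; push_cast; ring
      have : (∑ t ∈ range (M+1), (-1:ℤ)^(t+1) * ((M+1).choose (t+1) : ℤ) * (((t+1)+j).choose s : ℤ))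
          = (∑ t ∈ range (M+1), (-1:ℤ)^(t+1) * (M.choose t : ℤ) * ((t+(j+1)).choose s : ℤ))
            + (∑ t ∈ range (M+1), (-1:ℤ)^(t+1) * (M.choose (t+1) : ℤ) * (((t+1)+j).choose s : ℤ)) := by
        rw [← Finset.sum_add_distrib]
        refine Finset.sum_congr rfl fun t _ => ?_
        rw [e1]
        have : (t+1)+j = t+(j+1) := by ring
        rw [this]; ring
      rw [this]
      have h2 : (∑ t ∈ range (M+1), (-1:ℤ)^(t+1) * (M.choose (t+1) : ℤ) * (((t+1)+j).choose s : ℤ))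
          = (∑ t ∈ range (M+1), (-1:ℤ)^t * (M.choose t : ℤ) * ((t+j).choose s : ℤ))
            - (-1:ℤ)^0 * (M.choose 0 : ℤ) * ((0+j).choose s : ℤ) := by
        rw [Finset.sum_range_succ' (fun t => (-1:ℤ)^t * (M.choose t : ℤ) * ((t+j).choose s : ℤ)) M]
        have : (∑ t ∈ range M, (-1:ℤ)^(t+1) * (M.choose (t+1) : ℤ) * (((t+1)+j).choose s : ℤ))
            = (∑ t ∈ range (M+1), (-1:ℤ)^(t+1) * (M.choose (t+1) : ℤ) * (((t+1)+j).choose s : ℤ)) := by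
          rw [Finset.sum_range_succ]
          simp [Nat.choose_succ_self]
        rw [← this]; ring
      have h3 : (∑ t ∈ range (M+1), (-1:ℤ)^(t+1) * (M.choose t : ℤ) * ((t+(j+1)).choose s : ℤ))
          = - (∑ t ∈ range (M+1), (-1:ℤ)^t * (M.choose t : ℤ) * ((t+(j+1)).choose s : ℤ)) := by
        rw [← Finset.sum_neg_distrib]
        exact Finset.sum_congr rfl fun t _ => by ring
      rw [h2, h3]; simp; ring
    rw [step, ih j s, ih (j+1) s]
    by_cases h1 : M + 1 ≤ s
    · have hM : M ≤ s := by omega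
      rw [if_pos h1, if_pos hM, if_pos hM]
      have hsM : s - M = (s - (M+1)) + 1 := by omega
      rw [hsM]
      rw [Nat.choose_succ_succ j (s - (M+1))]
      push_cast; ring
    · by_cases h2 : M ≤ s
      · have : s - M = 0 := by omega
        rw [if_neg h1, if_pos h2, if_pos h2, this]
        simp
      · rw [if_neg h1, if_neg h2, if_neg h2]; ring

lemma neg_one_pow_sub {t M : ℕ} (h : t ≤ M) : (-1:ℤ)^(M-t) = (-1)^M * (-1)^t := by
  have h1 : (-1:ℤ)^M = (-1)^(M-t) * (-1)^t := by
    rw [← pow_add]; congr 1; omega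
  have h2 : (-1:ℤ)^t * (-1)^t = 1 := by
    rw [← pow_add, ← two_mul]; exact Even.neg_one_pow ⟨t, two_mul t⟩
  calc (-1:ℤ)^(M-t) = (-1)^(M-t) * ((-1)^t * (-1)^t) := by rw [h2, mul_one]
    _ = (-1)^M * (-1)^t := by rw [← mul_assoc, ← h1]

lemma keyIdent (N j k : ℕ) (hj : j ≤ N) (hk : k ≤ N) :
    (∑ m ∈ range (N+1), (-1:ℤ)^(N-m) * (N.choose m : ℤ) * (m.choose j : ℤ) * (m.choose (N-k) : ℤ))
      = (N.choose j : ℤ) * (j.choose k : ℤ) := by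
  set s := N - k with hs
  set f : ℕ → ℤ := fun m => (-1:ℤ)^(N-m) * (N.choose m : ℤ) * (m.choose j : ℤ) * (m.choose s : ℤ) with hf
  have h1 : (∑ m ∈ range (N+1), f m) = ∑ m ∈ Finset.Ico j (N+1), f m := by
    refine (Finset.sum_subset ?_ ?_).symm
    · intro m hm; rw [Finset.mem_Ico] at hm; exact Finset.mem_range.2 hm.2
    · intro m hm hm'
      rw [Finset.mem_range] at hm; rw [Finset.mem_Ico] at hm'
      have : m < j := by omega
      simp [hf, Nat.choose_eq_zero_of_lt this]
  rw [h1, Finset.sum_Ico_eq_sum_range]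
  have h2 : ∀ t ∈ range (N+1-j), f (j+t)
      = (-1:ℤ)^(N-j) * (N.choose j : ℤ) * ((-1:ℤ)^t * ((N-j).choose t : ℤ) * ((t+j).choose s : ℤ)) := by
    intro t ht
    rw [Finset.mem_range] at ht
    have htj : j + t ≤ N := by omega
    have hcm : (N.choose (j+t) : ℤ) * ((j+t).choose j : ℤ)
        = (N.choose j : ℤ) * ((N-j).choose t : ℤ) := by
      have := Nat.choose_mul (n := N) (Nat.le_add_right j t)
      have h' : j + t - j = t := by omega
      rw [h'] at this
      exact_mod_cast congrArg (Nat.cast : ℕ → ℤ) this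
    have hsign : (-1:ℤ)^(N-(j+t)) = (-1)^(N-j) * (-1)^t := by
      have : N - (j+t) = (N-j) - t := by omega
      rw [this, neg_one_pow_sub (by omega : t ≤ N - j)]
    rw [hf]
    simp only
    rw [hsign]
    have : (j+t).choose s = (t+j).choose s := by rw [Nat.add_comm]
    rw [this]
    calc (-1:ℤ)^(N-j) * (-1)^t * (N.choose (j+t) : ℤ) * ((j+t).choose j : ℤ) * ((t+j).choose s : ℤ)
        = (-1:ℤ)^(N-j) * (-1)^t * ((N.choose (j+t) : ℤ) * ((j+t).choose j : ℤ)) * ((t+j).choose s : ℤ) := by ring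
      _ = (-1:ℤ)^(N-j) * (-1)^t * ((N.choose j : ℤ) * ((N-j).choose t : ℤ)) * ((t+j).choose s : ℤ) := by rw [hcm]
      _ = _ := by ring
  rw [Finset.sum_congr rfl h2, ← Finset.mul_sum]
  have hrange : N + 1 - j = (N - j) + 1 := by omega
  rw [hrange, Gsum (N-j) j s]
  have hsq : (-1:ℤ)^(N-j) * (-1)^(N-j) = 1 := by
    rw [← pow_add, ← two_mul]; exact Even.neg_one_pow ⟨N-j, two_mul _⟩
  by_cases hkj : k ≤ j
  · have hle : N - j ≤ s := by omega
    rw [if_pos hle]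
    have : s - (N - j) = j - k := by omega
    rw [this, Nat.choose_symm hkj]
    calc (-1:ℤ)^(N-j) * (N.choose j : ℤ) * ((-1)^(N-j) * (j.choose k : ℤ))
        = ((-1:ℤ)^(N-j) * (-1)^(N-j)) * ((N.choose j : ℤ) * (j.choose k : ℤ)) := by ring
      _ = _ := by rw [hsq, one_mul]
  · have hle : ¬ (N - j ≤ s) := by omega
    rw [if_neg hle, Nat.choose_eq_zero_of_lt (by omega : j < k)]
    simp

/-- number of excedances -/
def excC {m : ℕ} (π : Equiv.Perm (Fin m)) : ℕ :=
  ((Finset.univ : Finset (Fin m)).filter (fun i => i.1 < (π i).1)).card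

/-- derangements of Fin j as a Finset -/
def derSet (j : ℕ) : Finset (Equiv.Perm (Fin j)) :=
  Finset.univ.filter (fun δ => ∀ i, δ i ≠ i)

/-- derangements with k excedances -/
def dExc (j k : ℕ) : ℕ := ((derSet j).filter (fun δ => excC δ = k)).card

lemma BIJ {m : ℕ} (S : Finset (Fin m)) (w : ℕ → ℕ) :
    ∑ π ∈ Finset.univ.filter
        (fun π : Equiv.Perm (Fin m) => Finset.univ.filter (fun i => π i ≠ i) = S),
        w (excC π)
      = ∑ δ ∈ derSet S.card, w (excC δ) := by
  classical
  set e := S.orderIsoOfFin rfl with he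
  -- the total map from derangements to permutations of Fin m
  set G : Equiv.Perm (Fin S.card) → Equiv.Perm (Fin m) :=
    fun δ => Equiv.Perm.ofSubtype (Equiv.permCongr e.toEquiv δ) with hG
  have hGmem : ∀ (δ : Equiv.Perm (Fin S.card)) (i : Fin m) (hi : i ∈ S),
      G δ i = (e (δ (e.symm ⟨i, hi⟩)) : Fin m) := by
    intro δ i hi
    rw [hG]
    simp only
    rw [Equiv.Perm.ofSubtype_apply_of_mem _ hi]
    simp [Equiv.permCongr_apply]
  have hGnot : ∀ (δ : Equiv.Perm (Fin S.card)) (i : Fin m), i ∉ S → G δ i = i := by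
    intro δ i hi
    exact Equiv.Perm.ofSubtype_apply_of_not_mem _ hi
  -- excedance preservation
  have hexc : ∀ δ : Equiv.Perm (Fin S.card), δ ∈ derSet S.card → excC (G δ) = excC δ := by
    intro δ _
    unfold excC
    refine (Finset.card_bij (fun r _ => (e r : Fin m)) ?_ ?_ ?_).symm
    · intro r hr
      simp only [mem_filter, mem_univ, true_and] at hr ⊢
      have hi : (e r : Fin m) ∈ S := (e r).2
      rw [hGmem δ _ hi]
      have : e.symm ⟨(e r : Fin m), hi⟩ = r := by
        rw [show (⟨(e r : Fin m), hi⟩ : {x // x ∈ S}) = e r from Subtype.ext rfl]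
        exact e.symm_apply_apply r
      rw [this]
      have := e.lt_iff_lt.2 (show r < δ r from hr)
      exact Subtype.coe_lt_coe.2 this
    · intro r₁ _ r₂ _ h
      exact e.injective (Subtype.ext h)
    · intro i hi
      simp only [mem_filter, mem_univ, true_and] at hi
      have hiS : i ∈ S := by
        by_contra hiS
        rw [hGnot δ i hiS] at hi
        omega
      refine ⟨e.symm ⟨i, hiS⟩, ?_, ?_⟩
      · simp only [mem_filter, mem_univ, true_and]
        rw [hGmem δ i hiS] at hi
        have : (⟨i, hiS⟩ : {x // x ∈ S}) < e (δ (e.symm ⟨i, hiS⟩)) := Subtype.coe_lt_coe.1 hi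
        have h2 : e (e.symm ⟨i, hiS⟩) < e (δ (e.symm ⟨i, hiS⟩)) := by
          rwa [e.apply_symm_apply]
        exact e.lt_iff_lt.1 h2
      · show (e (e.symm ⟨i, hiS⟩) : Fin m) = i
        exact congrArg Subtype.val (e.apply_symm_apply _)
  refine (Finset.sum_bij (fun δ _ => G δ) ?_ ?_ ?_ ?_).symm
  -- maps into filter
  · intro δ hδ
    simp only [derSet, mem_filter, mem_univ, true_and] at hδ
    simp only [mem_filter, mem_univ, true_and]
    ext i
    simp only [mem_filter, mem_univ, true_and]
    constructor
    · intro hne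
      by_contra hiS
      exact hne (hGnot δ i hiS)
    · intro hiS
      rw [hGmem δ i hiS]
      intro hcontra
      have : e (δ (e.symm ⟨i, hiS⟩)) = ⟨i, hiS⟩ := Subtype.ext hcontra
      have h2 : δ (e.symm ⟨i, hiS⟩) = e.symm ⟨i, hiS⟩ := by
        have := congrArg e.symm this
        rwa [e.symm_apply_apply] at this
      exact hδ _ h2
  -- injective
  · intro δ₁ _ δ₂ _ h
    have h' : G δ₁ = G δ₂ := h
    refine Equiv.ext fun r => ?_
    have h1 := hGmem δ₁ (e r : Fin m) (e r).2
    have h2 := hGmem δ₂ (e r : Fin m) (e r).2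
    rw [h'] at h1
    rw [h1] at h2
    have hr : e.symm ⟨(e r : Fin m), (e r).2⟩ = r := by
      rw [show (⟨(e r : Fin m), (e r).2⟩ : {x // x ∈ S}) = e r from Subtype.ext rfl]
      exact e.symm_apply_apply r
    rw [hr] at h2
    exact e.injective (Subtype.ext h2)
  -- surjective
  · intro π hπ
    simp only [mem_filter, mem_univ, true_and] at hπ
    have hmem : ∀ x : Fin m, x ∈ S ↔ π x ≠ x := by
      intro x; rw [← hπ]; simp
    have hstab : ∀ x : Fin m, x ∈ S ↔ π x ∈ S := by
      intro x
      rw [hmem, hmem]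
      constructor
      · intro h h2
        exact h (π.injective h2)
      · intro h h2
        rw [h2] at h; exact h h2
    set δ : Equiv.Perm (Fin S.card) :=
      (Equiv.permCongr e.toEquiv.symm) (π.subtypePerm fun x => (hstab x).symm) with hδdef
    have happ : ∀ r, δ r = e.symm ⟨π (e r : Fin m), (hstab _).1 (e r).2⟩ := by
      intro r
      rw [hδdef]
      simp [Equiv.permCongr_apply, Equiv.Perm.subtypePerm_apply]
    refine ⟨δ, ?_, ?_⟩
    · simp only [derSet, mem_filter, mem_univ, true_and]
      intro r hcontra
      rw [happ] at hcontra
      have := congrArg e hcontra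
      rw [e.apply_symm_apply] at this
      have hval : π (e r : Fin m) = (e r : Fin m) := congrArg Subtype.val this
      exact ((hmem _).1 (e r).2) hval
    · refine Equiv.ext fun i => ?_
      by_cases hiS : i ∈ S
      · rw [hGmem δ i hiS, happ]
        have h1 : e (e.symm ⟨i, hiS⟩) = ⟨i, hiS⟩ := e.apply_symm_apply _
        simp only [h1]
        rw [e.apply_symm_apply]
      · rw [hGnot δ i hiS]
        by_contra h
        exact hiS ((hmem i).2 (fun hc => h hc.symm))
  -- value compat
  · intro δ hδ
    rw [hexc δ hδ]

/-- number of non-fixed points -/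
def suppC {m : ℕ} (π : Equiv.Perm (Fin m)) : ℕ :=
  (Finset.univ.filter (fun i => π i ≠ i)).card

lemma groupG {m : ℕ} (w : ℕ → ℕ → ℕ) :
    ∑ π : Equiv.Perm (Fin m), w (suppC π) (excC π)
      = ∑ j ∈ range (m+1), (m.choose j) * ∑ δ ∈ derSet j, w j (excC δ) := by
  classical
  have h1 : ∑ π : Equiv.Perm (Fin m), w (suppC π) (excC π)
      = ∑ S ∈ (Finset.univ : Finset (Fin m)).powerset,
          ∑ π ∈ Finset.univ.filter
            (fun π : Equiv.Perm (Fin m) => Finset.univ.filter (fun i => π i ≠ i) = S),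
            w (suppC π) (excC π) := by
    exact (Finset.sum_fiberwise_of_maps_to (fun π _ => Finset.mem_powerset.2 (Finset.subset_univ _)) _).symm
  rw [h1]
  have h2 : ∀ S ∈ (Finset.univ : Finset (Fin m)).powerset,
      (∑ π ∈ Finset.univ.filter
        (fun π : Equiv.Perm (Fin m) => Finset.univ.filter (fun i => π i ≠ i) = S),
        w (suppC π) (excC π))
      = ∑ δ ∈ derSet S.card, w S.card (excC δ) := by
    intro S _
    have : ∀ π ∈ Finset.univ.filter
        (fun π : Equiv.Perm (Fin m) => Finset.univ.filter (fun i => π i ≠ i) = S),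
        w (suppC π) (excC π) = w S.card (excC π) := by
      intro π hπ
      simp only [mem_filter, mem_univ, true_and] at hπ
      rw [suppC, hπ]
    rw [Finset.sum_congr rfl this]
    exact BIJ S (w S.card)
  rw [Finset.sum_congr rfl h2]
  rw [Finset.sum_powerset (Finset.univ : Finset (Fin m))
    (fun S => ∑ δ ∈ derSet S.card, w S.card (excC δ))]
  rw [Finset.card_univ, Fintype.card_fin]
  refine Finset.sum_congr rfl fun j hj => ?_
  have h3 : ∀ S ∈ (Finset.univ : Finset (Fin m)).powersetCard j,
      (∑ δ ∈ derSet S.card, w S.card (excC δ)) = ∑ δ ∈ derSet j, w j (excC δ) := by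
    intro S hS
    have : S.card = j := (Finset.mem_powersetCard.1 hS).2
    rw [this]
  rw [Finset.sum_congr rfl h3, Finset.sum_const, Finset.card_powersetCard, Finset.card_univ,
    Fintype.card_fin, smul_eq_mul]

lemma C1 (m k : ℕ) : eulerianExc m k = ∑ j ∈ range (m+1), (m.choose j) * dExc j k := by
  have := groupG (m := m) (fun _ e => if e = k then 1 else 0)
  have hL : ∑ π : Equiv.Perm (Fin m), (if excC π = k then 1 else 0) = eulerianExc m k := by
    rw [eulerianExc, Finset.card_filter]
    rfl
  rw [hL] at this
  rw [this]
  refine Finset.sum_congr rfl fun j _ => ?_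
  congr 1
  rw [dExc, Finset.card_filter]

lemma dExc_eq_zero {j k : ℕ} (h : j < k) : dExc j k = 0 := by
  rw [dExc, Finset.card_eq_zero]
  rw [Finset.eq_empty_iff_forall_notMem]
  intro δ hδ
  simp only [mem_filter] at hδ
  have : excC δ ≤ j := le_trans (Finset.card_filter_le _ _) (by simp)
  omega

lemma eulerianExc_eq_zero {m k : ℕ} (h : m < k) : eulerianExc m k = 0 := by
  rw [eulerianExc, Finset.card_eq_zero, Finset.eq_empty_iff_forall_notMem]
  intro π hπ
  simp only [mem_filter] at hπ
  have : ((Finset.univ : Finset (Fin m)).filter (fun i => i.1 < (π i).1)).card ≤ m :=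
    le_trans (Finset.card_filter_le _ _) (by simp)
  omega

section Main
variable (N : ℕ) (hN : 0 < N)
include hN

/-- residue of an integer as an element of `Fin N` -/
def resid (i : ℤ) : Fin N :=
  ⟨(i % N).toNat, by
    have h0 : 0 ≤ i % (N:ℤ) := Int.emod_nonneg i (by exact_mod_cast hN.ne')
    have h1 : i % (N:ℤ) < N := Int.emod_lt_of_pos i (by exact_mod_cast hN)
    omega⟩

lemma resid_coe_eq (i : ℤ) : ((resid N hN i : Fin N) : ℤ) = i % N := by
  have h0 : 0 ≤ i % (N:ℤ) := Int.emod_nonneg i (by exact_mod_cast hN.ne')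
  simp [resid]
  omega

lemma resid_val (r : Fin N) : resid N hN (r : ℤ) = r := by
  have h1 : ((r:ℕ) : ℤ) % (N:ℤ) = ((r:ℕ) : ℤ) := Int.emod_eq_of_lt (by positivity)
    (by exact_mod_cast r.2)
  apply Fin.ext
  simp [resid, h1]

lemma key_mod (a t : ℤ) (h0 : 0 ≤ a) (h1 : a < N) :
    (a + N * t) % N = a ∧ (a + N * t) / N = t := by
  have hNz : (N:ℤ) ≠ 0 := by exact_mod_cast hN.ne'
  constructor
  · rw [Int.add_mul_emod_self_left, Int.emod_eq_of_lt h0 h1]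
  · rw [Int.add_mul_ediv_left _ _ hNz, Int.ediv_eq_zero_of_lt h0 h1, zero_add]

lemma resid_shift (a : Fin N) (t : ℤ) : resid N hN ((a:ℤ) + N * t) = a := by
  apply Fin.ext
  have := (key_mod N hN (a:ℤ) t (by positivity) (by exact_mod_cast a.2)).1
  simp [resid, this]

/-- `d`-value function determined by two disjoint finsets -/
def dFun (A B : Finset (Fin N)) (r : Fin N) : ℤ :=
  if r ∈ A then -1 else if r ∈ B then 1 else 0

/-- construction of the affine permutation from window data -/
def mkσ (π : Equiv.Perm (Fin N)) (A B : Finset (Fin N)) : ℤ → ℤ :=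
  fun i => ((π (resid N hN i) : Fin N) : ℤ) + N * dFun N A B (resid N hN i) + N * (i / N)

lemma mkσ_coe (π : Equiv.Perm (Fin N)) (A B : Finset (Fin N)) (r : Fin N) :
    mkσ N hN π A B (r : ℤ) = ((π r : Fin N) : ℤ) + N * dFun N A B r := by
  have h2 : ((r:ℕ):ℤ) / (N:ℤ) = 0 := Int.ediv_eq_zero_of_lt (by positivity) (by exact_mod_cast r.2)
  rw [mkσ, resid_val N hN r, h2, mul_zero, add_zero]


lemma mkσ_period (π : Equiv.Perm (Fin N)) (A B : Finset (Fin N)) (i : ℤ) :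
    mkσ N hN π A B (i + N) = mkσ N hN π A B i + N := by
  have hNz : (N:ℤ) ≠ 0 := by exact_mod_cast hN.ne'
  have h1 : resid N hN (i + N) = resid N hN i := by
    apply Fin.ext
    simp only [resid]
    congr 1
    conv_lhs => rw [show i + (N:ℤ) = i + N * 1 by ring]
    rw [Int.add_mul_emod_self_left]
  have h2 : (i + N) / N = i / N + 1 := by
    conv_lhs => rw [show i + (N:ℤ) = i + N * 1 by ring]
    rw [Int.add_mul_ediv_left _ _ hNz]
  rw [mkσ, mkσ, h1, h2]
  ring

/-- sums of N-periodic functions over a window -/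
lemma sum_window (g : ℤ → ℤ) (hg : ∀ i, g (i + N) = g i) :
    ∑ i ∈ Finset.Icc (1 : ℤ) N, g i = ∑ r : Fin N, g (r : ℤ) := by
  have resN : ((resid N hN (N:ℤ)) : ℕ) = 0 := by
    have h := resid_coe_eq N hN (N:ℤ)
    rw [Int.emod_self] at h
    exact_mod_cast h
  have resid_small : ∀ i : ℤ, 1 ≤ i → i < N → ((resid N hN i : Fin N) : ℤ) = i := by
    intro i h1 h2
    rw [resid_coe_eq, Int.emod_eq_of_lt (by omega) h2]
  refine Finset.sum_nbij' (i := fun i => resid N hN i)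
    (j := fun r => if (r : ℕ) = 0 then (N : ℤ) else ((r : ℕ) : ℤ)) ?_ ?_ ?_ ?_ ?_
  · intro a _; exact Finset.mem_univ _
  · intro r _
    show (if (r : ℕ) = 0 then (N : ℤ) else ((r : ℕ) : ℤ)) ∈ Finset.Icc (1:ℤ) N
    rw [Finset.mem_Icc]
    by_cases h : (r : ℕ) = 0
    · rw [if_pos h]
      exact ⟨by exact_mod_cast hN, le_refl _⟩
    · rw [if_neg h]
      have := r.2
      exact ⟨by exact_mod_cast Nat.one_le_iff_ne_zero.2 h, by exact_mod_cast le_of_lt r.2⟩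
  · intro i hi
    rw [Finset.mem_Icc] at hi
    show (if ((resid N hN i : Fin N) : ℕ) = 0 then (N : ℤ) else (((resid N hN i : Fin N) : ℕ) : ℤ)) = i
    by_cases h : i = N
    · subst h
      rw [if_pos resN]
    · have hlt : i < N := lt_of_le_of_ne hi.2 h
      have hval : ((resid N hN i : Fin N) : ℤ) = i := resid_small i hi.1 hlt
      have hne : ((resid N hN i : Fin N) : ℕ) ≠ 0 := by omega
      rw [if_neg hne]
      exact hval
  · intro r _
    show resid N hN (if (r : ℕ) = 0 then (N : ℤ) else ((r : ℕ) : ℤ)) = r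
    by_cases h : (r : ℕ) = 0
    · rw [if_pos h]
      apply Fin.ext
      rw [resN, h]
    · rw [if_neg h]
      exact resid_val N hN r
  · intro i hi
    rw [Finset.mem_Icc] at hi
    show g i = g ((resid N hN i : Fin N) : ℤ)
    by_cases h : i = N
    · subst h
      have h0 : ((resid N hN (N:ℤ) : Fin N) : ℤ) = 0 := by exact_mod_cast resN
      rw [h0, show ((N:ℤ)) = (0:ℤ) + N by ring, hg 0]
    · have hlt : i < N := lt_of_le_of_ne hi.2 h
      rw [resid_small i hi.1 hlt]


def excSet (π : Equiv.Perm (Fin N)) : Finset (Fin N) :=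
  Finset.univ.filter (fun r => r.1 < (π r).1)

def aexcSet (π : Equiv.Perm (Fin N)) : Finset (Fin N) :=
  Finset.univ.filter (fun r => (π r).1 < r.1)

omit hN in
lemma dFun_sum (π : Equiv.Perm (Fin N)) (A B : Finset (Fin N)) (hA : A ⊆ excSet N π)
    (hB : B ⊆ aexcSet N π) (hcard : A.card = B.card) :
    ∑ r : Fin N, dFun N A B r = 0 := by
  have hdisj : ∀ r, r ∈ A → r ∉ B := by
    intro r hrA hrB
    have h1 := hA hrA
    have h2 := hB hrB
    simp only [excSet, aexcSet, Finset.mem_filter] at h1 h2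
    omega
  have hpt : ∀ r : Fin N, dFun N A B r
      = (if r ∈ B then (1:ℤ) else 0) - (if r ∈ A then (1:ℤ) else 0) := by
    intro r
    rw [dFun]
    by_cases h1 : r ∈ A
    · rw [if_pos h1, if_pos h1, if_neg (hdisj r h1)]
      ring
    · rw [if_neg h1, if_neg h1]
      by_cases h2 : r ∈ B <;> simp [h2]
  rw [Finset.sum_congr rfl (fun r _ => hpt r), Finset.sum_sub_distrib]
  rw [Finset.sum_ite_mem, Finset.sum_ite_mem, Finset.univ_inter, Finset.univ_inter]
  simp [hcard]

lemma mkσ_bap (π : Equiv.Perm (Fin N)) (A B : Finset (Fin N)) (hA : A ⊆ excSet N π)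
    (hB : B ⊆ aexcSet N π) (hcard : A.card = B.card) :
    IsBoundedAffinePerm N (mkσ N hN π A B) := by
  have hNz : (N:ℤ) ≠ 0 := by exact_mod_cast hN.ne'
  have hNpos : (0:ℤ) < N := by exact_mod_cast hN
  have hπlt : ∀ r : Fin N, ((π r : Fin N) : ℤ) < N := fun r => by exact_mod_cast (π r).2
  have hπge : ∀ r : Fin N, (0:ℤ) ≤ ((π r : Fin N) : ℤ) := fun r => by positivity
  have hd : ∀ r, dFun N A B r = -1 ∨ dFun N A B r = 0 ∨ dFun N A B r = 1 := by
    intro r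
    rw [dFun]
    by_cases h1 : r ∈ A
    · simp [h1]
    · by_cases h2 : r ∈ B <;> simp [h1, h2]
  have hspec : ∀ i : ℤ, (mkσ N hN π A B i) % N = ((π (resid N hN i) : Fin N) : ℤ) ∧
      (mkσ N hN π A B i) / N = dFun N A B (resid N hN i) + i / N := by
    intro i
    have := key_mod N hN ((π (resid N hN i) : Fin N) : ℤ) (dFun N A B (resid N hN i) + i / N)
      (hπge _) (hπlt _)
    constructor
    · rw [mkσ, show ((π (resid N hN i) : Fin N) : ℤ) + N * dFun N A B (resid N hN i) + N * (i/N)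
        = ((π (resid N hN i) : Fin N) : ℤ) + N * (dFun N A B (resid N hN i) + i / N) by ring]
      exact this.1
    · rw [mkσ, show ((π (resid N hN i) : Fin N) : ℤ) + N * dFun N A B (resid N hN i) + N * (i/N)
        = ((π (resid N hN i) : Fin N) : ℤ) + N * (dFun N A B (resid N hN i) + i / N) by ring]
      exact this.2
  refine ⟨⟨?_, ?_⟩, mkσ_period N hN π A B, ?_, ?_⟩
  · -- injective
    intro i i' h
    have h1 := (hspec i).1
    have h2 := (hspec i').1
    rw [h] at h1
    have hr : resid N hN i = resid N hN i' := π.injective (by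
      apply Fin.ext
      have := h1.symm.trans h2
      exact_mod_cast this)
    have h3 := (hspec i).2
    have h4 := (hspec i').2
    rw [h, h4] at h3
    rw [hr] at h3
    have hdiv : i / N = i' / N := by omega
    have e1 := Int.mul_ediv_add_emod i N
    have e2 := Int.mul_ediv_add_emod i' N
    have hm1 : i % N = ((resid N hN i : Fin N) : ℤ) := (resid_coe_eq N hN i).symm
    have hm2 : i' % N = ((resid N hN i' : Fin N) : ℤ) := (resid_coe_eq N hN i').symm
    rw [hm1] at e1
    rw [hm2] at e2
    rw [hr] at e1
    have h5 : (N:ℤ) * (i / N) = N * (i' / N) := by rw [hdiv]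
    linarith
  · -- surjective
    intro v
    set s := resid N hN v with hs
    set r := π.symm s with hr
    refine ⟨(r : ℤ) + N * (v / N - dFun N A B r), ?_⟩
    rw [mkσ, resid_shift N hN r _]
    have hdiv : ((r:ℤ) + N * (v / N - dFun N A B r)) / N = v / N - dFun N A B r :=
      (key_mod N hN (r:ℤ) _ (by positivity) (by exact_mod_cast r.2)).2
    rw [hdiv]
    have hπr : π r = s := by rw [hr]; exact π.apply_symm_apply s
    rw [hπr]
    have : ((s : Fin N) : ℤ) = v % N := resid_coe_eq N hN v
    rw [this]
    have := Int.mul_ediv_add_emod v N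
    ring_nf
    omega
  · -- sum
    have hper : ∀ i : ℤ, (mkσ N hN π A B (i + N) - (i + N)) = mkσ N hN π A B i - i := by
      intro i
      rw [mkσ_period N hN π A B i]
      ring
    have h1 : ∑ i ∈ Finset.Icc (1:ℤ) N, (mkσ N hN π A B i - i)
        = ∑ r : Fin N, (mkσ N hN π A B (r:ℤ) - (r:ℤ)) := sum_window N hN _ hper
    have h2 : ∑ r : Fin N, (mkσ N hN π A B (r:ℤ) - (r:ℤ))
        = (∑ r : Fin N, (((π r : Fin N) : ℤ) - (r:ℤ))) + N * ∑ r : Fin N, dFun N A B r := by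
      rw [Finset.mul_sum, ← Finset.sum_add_distrib]
      refine Finset.sum_congr rfl fun r _ => ?_
      rw [mkσ_coe N hN π A B r]
      ring
    have h3 : ∑ r : Fin N, (((π r : Fin N) : ℤ) - (r:ℤ)) = 0 := by
      rw [Finset.sum_sub_distrib]
      have := Equiv.sum_comp π (fun r : Fin N => ((r : Fin N) : ℤ))
      rw [this]
      ring
    have h4 := dFun_sum N π A B hA hB hcard
    have h5 : ∑ i ∈ Finset.Icc (1:ℤ) N, (mkσ N hN π A B i - i) = 0 := by
      rw [h1, h2, h3, h4]
      ring
    rw [Finset.sum_sub_distrib] at h5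
    omega
  · -- bound
    intro i
    set r := resid N hN i with hr
    have e1 := Int.mul_ediv_add_emod i N
    have hm1 : i % N = ((r : Fin N) : ℤ) := (resid_coe_eq N hN i).symm
    have hval : mkσ N hN π A B i - i
        = ((π r : Fin N) : ℤ) + N * dFun N A B r - ((r : Fin N) : ℤ) := by
      rw [mkσ, ← hr]
      omega
    rw [hval, abs_lt]
    have hrlt : ((r : Fin N) : ℤ) < N := by exact_mod_cast r.2
    have hrge : (0:ℤ) ≤ ((r : Fin N) : ℤ) := by positivity
    by_cases h1 : r ∈ A
    · have hex := hA h1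
      simp only [excSet, Finset.mem_filter] at hex
      have hlt : ((r : Fin N) : ℤ) < ((π r : Fin N) : ℤ) := by exact_mod_cast hex.2
      have : dFun N A B r = -1 := by simp [dFun, h1]
      rw [this]
      constructor <;> [omega; omega]
    · by_cases h2 : r ∈ B
      · have hex := hB h2
        simp only [aexcSet, Finset.mem_filter] at hex
        have hlt : ((π r : Fin N) : ℤ) < ((r : Fin N) : ℤ) := by exact_mod_cast hex.2
        have : dFun N A B r = 1 := by simp [dFun, h1, h2]
        rw [this]
        constructor <;> [omega; omega]
      · have : dFun N A B r = 0 := by simp [dFun, h1, h2]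
        rw [this]
        have := hπlt r
        have := hπge r
        constructor <;> [omega; omega]


omit hN in
lemma period_mul (σ : ℤ → ℤ) (hper : ∀ i : ℤ, σ (i + N) = σ i + N) :
    ∀ (t : ℤ) (i : ℤ), σ (i + N * t) = σ i + N * t := by
  intro t
  induction t using Int.induction_on with
  | zero => intro i; simp
  | succ k ih =>
    intro i
    have h1 : i + (N:ℤ) * (k + 1) = (i + N * k) + N := by ring
    rw [h1, hper, ih]
    ring
  | pred k ih =>
    intro i
    have h1 : i + (N:ℤ) * (-k - 1) + N = i + N * (-k) := by ring
    have h2 := hper (i + (N:ℤ) * (-k - 1))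
    rw [h1, ih] at h2
    have : σ (i + (N:ℤ) * (-k - 1)) = σ i + N * (-k) - N := by omega
    rw [this]
    ring

/-- the underlying window permutation of a bounded affine permutation -/
def πfun (σ : ℤ → ℤ) : Fin N → Fin N := fun r => resid N hN (σ (r : ℤ))

lemma πfun_inj (σ : ℤ → ℤ) (hσ : IsBoundedAffinePerm N σ) : Function.Injective (πfun N hN σ) := by
  have hNpos : (0:ℤ) < N := by exact_mod_cast hN
  intro r₁ r₂ h
  have hmod : σ (r₁:ℤ) % N = σ (r₂:ℤ) % N := by
    have h1 := resid_coe_eq N hN (σ (r₁:ℤ))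
    have h2 := resid_coe_eq N hN (σ (r₂:ℤ))
    rw [← h1, ← h2]
    exact_mod_cast congrArg (fun x : Fin N => (x : ℤ)) h
  have hsub : (σ (r₁:ℤ) - σ (r₂:ℤ)) % N = 0 := by
    rw [Int.sub_emod, hmod]
    simp
  set t := (σ (r₁:ℤ) - σ (r₂:ℤ)) / N with ht
  have he := Int.mul_ediv_add_emod (σ (r₁:ℤ) - σ (r₂:ℤ)) N
  rw [hsub, add_zero, ← ht] at he
  have hval : σ ((r₂:ℤ) + N * t) = σ (r₁:ℤ) := by
    rw [period_mul N σ hσ.2.1 t (r₂:ℤ)]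
    omega
  have harg : (r₂:ℤ) + N * t = (r₁:ℤ) := hσ.1.1 hval
  have hb1 : (0:ℤ) ≤ (r₁:ℤ) := by positivity
  have hb2 : ((r₁:ℤ)) < N := by exact_mod_cast r₁.2
  have hb3 : (0:ℤ) ≤ (r₂:ℤ) := by positivity
  have hb4 : ((r₂:ℤ)) < N := by exact_mod_cast r₂.2
  have ht0 : t = 0 := by
    by_contra ht0
    rcases lt_or_gt_of_ne ht0 with hlt | hgt
    · have : t ≤ -1 := by omega
      have : (N:ℤ) * t ≤ N * (-1) := by
        apply mul_le_mul_of_nonneg_left this (le_of_lt hNpos)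
      linarith
    · have : (1:ℤ) ≤ t := by omega
      have : (N:ℤ) * 1 ≤ N * t := by
        apply mul_le_mul_of_nonneg_left this (le_of_lt hNpos)
      linarith
  rw [ht0, mul_zero, add_zero] at harg
  exact (Fin.ext (by exact_mod_cast harg : (r₂:ℕ) = (r₁:ℕ))).symm

/-- window permutation as a permutation -/
noncomputable def πperm (σ : ℤ → ℤ) (hσ : IsBoundedAffinePerm N σ) : Equiv.Perm (Fin N) :=
  Equiv.ofBijective (πfun N hN σ)
    ((Fintype.bijective_iff_injective_and_card _).2 ⟨πfun_inj N hN σ hσ, rfl⟩)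

lemma extract (σ : ℤ → ℤ) (hσ : IsBoundedAffinePerm N σ) (r : Fin N) :
    σ (r:ℤ) = ((πfun N hN σ r : Fin N) : ℤ) + N * (σ (r:ℤ) / N)
      ∧ ((σ (r:ℤ) < 0 → σ (r:ℤ) / N = -1 ∧ (r:ℤ) < ((πfun N hN σ r : Fin N) : ℤ))
        ∧ ((N:ℤ) ≤ σ (r:ℤ) → σ (r:ℤ) / N = 1 ∧ ((πfun N hN σ r : Fin N) : ℤ) < (r:ℤ))
        ∧ (0 ≤ σ (r:ℤ) → σ (r:ℤ) < N → σ (r:ℤ) / N = 0)) := by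
  have hNpos : (0:ℤ) < N := by exact_mod_cast hN
  have hval : ((πfun N hN σ r : Fin N) : ℤ) = σ (r:ℤ) % N := resid_coe_eq N hN (σ (r:ℤ))
  have he := Int.mul_ediv_add_emod (σ (r:ℤ)) N
  have hb1 : (0:ℤ) ≤ (r:ℤ) := by positivity
  have hb2 : ((r:ℤ)) < N := by exact_mod_cast r.2
  have hbd := hσ.2.2.2 (r:ℤ)
  rw [abs_lt] at hbd
  refine ⟨by omega, ?_, ?_, ?_⟩
  · intro hneg
    have hq1 : σ (r:ℤ) / N < 0 := Int.ediv_neg_of_neg_of_pos hneg hNpos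
    have hq2 : (-1:ℤ) ≤ σ (r:ℤ) / N := by
      rw [Int.le_ediv_iff_mul_le hNpos]
      omega
    have hq : σ (r:ℤ) / N = -1 := by omega
    refine ⟨hq, ?_⟩
    rw [hq] at he
    omega
  · intro hge
    have hq1 : (1:ℤ) ≤ σ (r:ℤ) / N := by
      rw [Int.le_ediv_iff_mul_le hNpos]
      omega
    have hq2 : σ (r:ℤ) / N < 2 := by
      rw [Int.ediv_lt_iff_lt_mul hNpos]
      omega
    have hq : σ (r:ℤ) / N = 1 := by omega
    refine ⟨hq, ?_⟩
    rw [hq] at he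
    omega
  · intro h0 h1
    exact Int.ediv_eq_zero_of_lt h0 h1

def Aof (σ : ℤ → ℤ) : Finset (Fin N) := Finset.univ.filter (fun r => σ (r:ℤ) < 0)

def Bof (σ : ℤ → ℤ) : Finset (Fin N) := Finset.univ.filter (fun r => (N:ℤ) ≤ σ (r:ℤ))

def bapCond (x : Equiv.Perm (Fin N) × Finset (Fin N) × Finset (Fin N)) : Prop :=
  x.2.1 ⊆ excSet N x.1 ∧ x.2.2 ⊆ aexcSet N x.1 ∧ x.2.1.card = x.2.2.card

instance : DecidablePred (bapCond N) := fun x => by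
  unfold bapCond
  infer_instance

lemma dfun_eq_q (σ : ℤ → ℤ) (hσ : IsBoundedAffinePerm N σ) (r : Fin N) :
    dFun N (Aof N σ) (Bof N σ) r = σ (r:ℤ) / N := by
  have hNpos : (0:ℤ) < N := by exact_mod_cast hN
  obtain ⟨he, hneg, hge, hmid⟩ := extract N hN σ hσ r
  rw [dFun, Aof, Bof]
  simp only [Finset.mem_filter, Finset.mem_univ, true_and]
  by_cases h1 : σ (r:ℤ) < 0
  · rw [if_pos h1, (hneg h1).1]
  · rw [if_neg h1]
    by_cases h2 : (N:ℤ) ≤ σ (r:ℤ)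
    · rw [if_pos h2, (hge h2).1]
    · rw [if_neg h2, hmid (by omega) (by omega)]

lemma invCond (σ : ℤ → ℤ) (hσ : IsBoundedAffinePerm N σ) :
    bapCond N (πperm N hN σ hσ, Aof N σ, Bof N σ) := by
  have hNpos : (0:ℤ) < N := by exact_mod_cast hN
  have hπ : ∀ r, (πperm N hN σ hσ) r = πfun N hN σ r := fun r => rfl
  refine ⟨?_, ?_, ?_⟩
  · intro r hr
    rw [Aof, Finset.mem_filter] at hr
    obtain ⟨he, hneg, _, _⟩ := extract N hN σ hσ r
    have := (hneg hr.2).2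
    rw [excSet, Finset.mem_filter]
    refine ⟨Finset.mem_univ _, ?_⟩
    rw [hπ]
    exact_mod_cast this
  · intro r hr
    rw [Bof, Finset.mem_filter] at hr
    obtain ⟨he, _, hge, _⟩ := extract N hN σ hσ r
    have := (hge hr.2).2
    rw [aexcSet, Finset.mem_filter]
    refine ⟨Finset.mem_univ _, ?_⟩
    rw [hπ]
    exact_mod_cast this
  · -- cardinalities equal
    show (Aof N σ).card = (Bof N σ).card
    have hper : ∀ i : ℤ, (σ (i + N) - (i + N)) = σ i - i := by
      intro i
      rw [hσ.2.1 i]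
      ring
    have h1 : ∑ i ∈ Finset.Icc (1:ℤ) N, (σ i - i) = ∑ r : Fin N, (σ (r:ℤ) - (r:ℤ)) :=
      sum_window N hN _ hper
    have h0 : ∑ i ∈ Finset.Icc (1:ℤ) N, (σ i - i) = 0 := by
      rw [Finset.sum_sub_distrib, hσ.2.2.1]
      ring
    have h2 : ∑ r : Fin N, (σ (r:ℤ) - (r:ℤ))
        = (∑ r : Fin N, (((πfun N hN σ r : Fin N) : ℤ) - (r:ℤ)))
          + N * ∑ r : Fin N, (σ (r:ℤ) / N) := by
      rw [Finset.mul_sum, ← Finset.sum_add_distrib]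
      refine Finset.sum_congr rfl fun r _ => ?_
      have he := (extract N hN σ hσ r).1
      omega
    have h3 : ∑ r : Fin N, (((πfun N hN σ r : Fin N) : ℤ) - (r:ℤ)) = 0 := by
      rw [Finset.sum_sub_distrib]
      have := Equiv.sum_comp (πperm N hN σ hσ) (fun r : Fin N => ((r : Fin N) : ℤ))
      rw [show (∑ r : Fin N, (((πfun N hN σ r : Fin N)) : ℤ))
        = ∑ r : Fin N, (((πperm N hN σ hσ r : Fin N)) : ℤ) from rfl, this]
      ring
    have h4 : ∑ r : Fin N, (σ (r:ℤ) / N) = 0 := by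
      have hNe : (N:ℤ) ≠ 0 := by exact_mod_cast hN.ne'
      have : (N:ℤ) * ∑ r : Fin N, (σ (r:ℤ) / N) = 0 := by
        linarith [h0, h1, h2, h3]
      exact (mul_eq_zero.1 this).resolve_left hNe
    have hdisj : ∀ r : Fin N, r ∈ Aof N σ → r ∉ Bof N σ := by
      intro r h1 h2
      rw [Aof, Finset.mem_filter] at h1
      rw [Bof, Finset.mem_filter] at h2
      omega
    have h5 : ∑ r : Fin N, (σ (r:ℤ) / N)
        = ((Bof N σ).card : ℤ) - ((Aof N σ).card : ℤ) := by
      have hpt : ∀ r : Fin N, σ (r:ℤ) / N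
          = (if r ∈ Bof N σ then (1:ℤ) else 0) - (if r ∈ Aof N σ then (1:ℤ) else 0) := by
        intro r
        rw [← dfun_eq_q N hN σ hσ r, dFun]
        by_cases hA : r ∈ Aof N σ
        · rw [if_pos hA, if_pos hA, if_neg (hdisj r hA)]
          ring
        · rw [if_neg hA, if_neg hA]
          by_cases hB : r ∈ Bof N σ <;> simp [hB]
      rw [Finset.sum_congr rfl (fun r _ => hpt r), Finset.sum_sub_distrib]
      rw [Finset.sum_ite_mem, Finset.sum_ite_mem, Finset.univ_inter, Finset.univ_inter]
      simp
    rw [h5] at h4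
    omega

noncomputable def bapEquiv :
    {x : Equiv.Perm (Fin N) × Finset (Fin N) × Finset (Fin N) // bapCond N x}
      ≃ {σ : ℤ → ℤ // IsBoundedAffinePerm N σ} where
  toFun x := ⟨mkσ N hN x.1.1 x.1.2.1 x.1.2.2, mkσ_bap N hN x.1.1 x.1.2.1 x.1.2.2
    x.2.1 x.2.2.1 x.2.2.2⟩
  invFun s := ⟨(πperm N hN s.1 s.2, Aof N s.1, Bof N s.1), invCond N hN s.1 s.2⟩
  left_inv := by
    rintro ⟨⟨π, A, B⟩, hc⟩
    obtain ⟨hA, hB, hcard⟩ := hc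
    have hdisj : ∀ r : Fin N, r ∈ A → r ∉ B := by
      intro r h1 h2
      have e1 := hA h1
      have e2 := hB h2
      rw [excSet, Finset.mem_filter] at e1
      rw [aexcSet, Finset.mem_filter] at e2
      omega
    apply Subtype.ext
    have hσcoe : ∀ r : Fin N, mkσ N hN π A B (r:ℤ)
        = ((π r : Fin N) : ℤ) + N * dFun N A B r := mkσ_coe N hN π A B
    have hπlt : ∀ r : Fin N, ((π r : Fin N) : ℤ) < N := fun r => by exact_mod_cast (π r).2
    have hπge : ∀ r : Fin N, (0:ℤ) ≤ ((π r : Fin N) : ℤ) := fun r => by positivity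
    have hπeq : πperm N hN (mkσ N hN π A B) (mkσ_bap N hN π A B hA hB hcard) = π := by
      apply Equiv.ext
      intro r
      show πfun N hN (mkσ N hN π A B) r = π r
      rw [πfun, hσcoe r]
      exact resid_shift N hN (π r) (dFun N A B r)
    have hAeq : Aof N (mkσ N hN π A B) = A := by
      rw [Aof]
      ext r
      simp only [Finset.mem_filter, Finset.mem_univ, true_and]
      rw [hσcoe r]
      constructor
      · intro hneg
        by_contra hrA
        have hd : dFun N A B r = 0 ∨ dFun N A B r = 1 := by
          rw [dFun, if_neg hrA]
          by_cases hB' : r ∈ B <;> simp [hB']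
        rcases hd with hd | hd <;> rw [hd] at hneg <;>
          [exact absurd hneg (by omega); exact absurd hneg (by omega)]
      · intro hrA
        rw [dFun, if_pos hrA]
        have := hπlt r
        omega
    have hBeq : Bof N (mkσ N hN π A B) = B := by
      rw [Bof]
      ext r
      simp only [Finset.mem_filter, Finset.mem_univ, true_and]
      rw [hσcoe r]
      constructor
      · intro hge
        by_contra hrB
        have hd : dFun N A B r = 0 ∨ dFun N A B r = -1 := by
          rw [dFun]
          by_cases hA' : r ∈ A <;> simp [hA', hrB]
        rcases hd with hd | hd <;> rw [hd] at hge <;>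
          [exact absurd hge (by omega); exact absurd hge (by omega)]
      · intro hrB
        rw [dFun, if_neg (fun h => hdisj r h hrB), if_pos hrB]
        have := hπge r
        omega
    show (_, _, _) = (π, A, B)
    rw [hπeq, hAeq, hBeq]
  right_inv := by
    rintro ⟨σ, hσ⟩
    apply Subtype.ext
    show mkσ N hN (πperm N hN σ hσ) (Aof N σ) (Bof N σ) = σ
    funext i
    set r := resid N hN i with hrdef
    have hval : ((πfun N hN σ r : Fin N) : ℤ) + N * dFun N (Aof N σ) (Bof N σ) r
        = σ (r:ℤ) := by
      rw [dfun_eq_q N hN σ hσ r]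
      exact ((extract N hN σ hσ r).1).symm
    have e1 := Int.mul_ediv_add_emod i N
    have hm1 : i % N = ((r : Fin N) : ℤ) := (resid_coe_eq N hN i).symm
    have harg : (r:ℤ) + N * (i / N) = i := by omega
    calc mkσ N hN (πperm N hN σ hσ) (Aof N σ) (Bof N σ) i
        = ((πfun N hN σ r : Fin N) : ℤ) + N * dFun N (Aof N σ) (Bof N σ) r + N * (i / N) := rfl
      _ = σ (r:ℤ) + N * (i / N) := by rw [hval]
      _ = σ ((r:ℤ) + N * (i / N)) := (period_mul N σ hσ.2.1 (i/N) (r:ℤ)).symm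
      _ = σ i := by rw [harg]

lemma card_bap : Nat.card {σ : ℤ → ℤ // IsBoundedAffinePerm N σ}
    = (Finset.univ.filter (fun x : Equiv.Perm (Fin N) × Finset (Fin N) × Finset (Fin N) =>
        bapCond N x)).card := by
  rw [← Nat.card_congr (bapEquiv N hN), Nat.card_eq_fintype_card, Fintype.card_subtype]

omit hN in
lemma supp_eq_union (π : Equiv.Perm (Fin N)) :
    Finset.univ.filter (fun i => π i ≠ i) = excSet N π ∪ aexcSet N π := by
  ext r
  simp only [excSet, aexcSet, Finset.mem_union, Finset.mem_filter, Finset.mem_univ, true_and]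
  constructor
  · intro h
    have : (π r).1 ≠ r.1 := fun hc => h (Fin.ext hc)
    omega
  · intro h hc
    rw [hc] at h
    omega

omit hN in
lemma suppC_eq (π : Equiv.Perm (Fin N)) :
    suppC π = (excSet N π).card + (aexcSet N π).card := by
  rw [suppC, supp_eq_union N π]
  apply Finset.card_union_of_disjoint
  rw [excSet, aexcSet, Finset.disjoint_filter]
  intro r _ h1 h2
  omega

omit hN in
lemma vand (e a : ℕ) : ∑ j ∈ range (e+1), (e.choose j) * (a.choose j) = (e+a).choose e := by
  rw [Nat.add_choose_eq, Finset.Nat.sum_antidiagonal_eq_sum_range_succ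
    (fun x y => e.choose x * a.choose y) e]
  have h1 : ∀ j ∈ range (e+1), e.choose j * a.choose (e - j)
      = e.choose (e - j) * a.choose (e - j) := by
    intro j hj
    rw [Finset.mem_range] at hj
    congr 1
    exact (Nat.choose_symm (by omega)).symm
  rw [Finset.sum_congr rfl h1]
  have h2 := Finset.sum_range_reflect (fun j => e.choose j * a.choose j) (e+1)
  have h3 : ∀ j ∈ range (e+1), e.choose (e + 1 - 1 - j) * a.choose (e + 1 - 1 - j)
      = e.choose (e - j) * a.choose (e - j) := by
    intro j hj
    congr 2 <;> omega
  rw [Finset.sum_congr rfl h3] at h2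
  rw [h2]

omit hN in
lemma pairCount (π : Equiv.Perm (Fin N)) :
    (Finset.univ.filter (fun AB : Finset (Fin N) × Finset (Fin N) =>
        AB.1 ⊆ excSet N π ∧ AB.2 ⊆ aexcSet N π ∧ AB.1.card = AB.2.card)).card
      = (suppC π).choose (excC π) := by
  classical
  set E := excSet N π with hE
  set F := aexcSet N π with hF
  set e := E.card with he
  set a := F.card with ha
  have s1 : Finset.univ.filter (fun AB : Finset (Fin N) × Finset (Fin N) =>
        AB.1 ⊆ E ∧ AB.2 ⊆ F ∧ AB.1.card = AB.2.card)
      = (E.powerset ×ˢ F.powerset).filter (fun AB => AB.1.card = AB.2.card) := by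
    ext AB
    simp only [Finset.mem_filter, Finset.mem_univ, true_and, Finset.mem_product,
      Finset.mem_powerset]
    tauto
  rw [s1]
  have s2 : ((E.powerset ×ˢ F.powerset).filter (fun AB => AB.1.card = AB.2.card)).card
      = ∑ j ∈ range (e+1),
          (((E.powerset ×ˢ F.powerset).filter (fun AB => AB.1.card = AB.2.card)).filter
            (fun AB => AB.1.card = j)).card := by
    apply Finset.card_eq_sum_card_fiberwise
    intro AB hAB
    simp only [Finset.mem_coe, Finset.mem_filter, Finset.mem_product, Finset.mem_powerset] at hAB
    simp only [Finset.mem_coe, Finset.mem_range]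
    have := Finset.card_le_card hAB.1.1
    omega
  rw [s2]
  have s3 : ∀ j ∈ range (e+1),
      (((E.powerset ×ˢ F.powerset).filter (fun AB => AB.1.card = AB.2.card)).filter
        (fun AB => AB.1.card = j)).card = (e.choose j) * (a.choose j) := by
    intro j hj
    have heq : ((E.powerset ×ˢ F.powerset).filter (fun AB => AB.1.card = AB.2.card)).filter
        (fun AB => AB.1.card = j) = (E.powersetCard j) ×ˢ (F.powersetCard j) := by
      ext AB
      simp only [Finset.mem_filter, Finset.mem_product, Finset.mem_powerset,
        Finset.mem_powersetCard]
      constructor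
      · rintro ⟨⟨⟨h1, h2⟩, h3⟩, h4⟩
        exact ⟨⟨h1, h4⟩, ⟨h2, by omega⟩⟩
      · rintro ⟨⟨h1, h2⟩, h3, h4⟩
        exact ⟨⟨⟨h1, h3⟩, by omega⟩, h2⟩
    rw [heq, Finset.card_product, Finset.card_powersetCard, Finset.card_powersetCard]
  rw [Finset.sum_congr rfl s3, vand e a]
  have : suppC π = e + a := suppC_eq N π
  rw [this]
  congr 1

omit hN in
lemma count_filter_bapCond :
    (Finset.univ.filter (fun x : Equiv.Perm (Fin N) × Finset (Fin N) × Finset (Fin N) =>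
        bapCond N x)).card
      = ∑ π : Equiv.Perm (Fin N), (suppC π).choose (excC π) := by
  classical
  rw [Finset.card_filter, Fintype.sum_prod_type]
  refine Finset.sum_congr rfl fun π _ => ?_
  have : ∀ AB : Finset (Fin N) × Finset (Fin N),
      (if bapCond N (π, AB) then (1:ℕ) else 0)
        = (if (AB.1 ⊆ excSet N π ∧ AB.2 ⊆ aexcSet N π ∧ AB.1.card = AB.2.card) then 1 else 0) :=
    fun AB => rfl
  rw [Finset.sum_congr rfl (fun AB _ => this AB), ← Finset.card_filter]
  exact pairCount N π

end Main

/-- exact enumeration of bounded affine permutations of size N. -/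
theorem stmt_5 (N : ℕ) (hN : 0 < N) :
    (Nat.card {σ : ℤ → ℤ // IsBoundedAffinePerm N σ} : ℤ) =
      ∑ m ∈ Finset.range (N + 1), (N.choose m : ℤ) *
        ∑ k ∈ Finset.range (m + 1),
          (m.choose (N - k) : ℤ) * (-1) ^ (N - m) * (eulerianExc m k : ℤ) := by
  classical
  -- inner fiberwise decomposition of derangement sums
  have hinner : ∀ j : ℕ, j ≤ N →
      (∑ δ ∈ derSet j, (j.choose (excC δ)))
        = ∑ k ∈ range (N+1), dExc j k * j.choose k := by
    intro j hj
    rw [← Finset.sum_fiberwise_of_maps_to (g := excC) (t := range (N+1))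
      (fun δ _ => by
        rw [Finset.mem_range]
        have : excC δ ≤ j := le_trans (Finset.card_filter_le _ _) (by simp)
        omega) (fun δ => j.choose (excC δ))]
    refine Finset.sum_congr rfl fun k _ => ?_
    have : ∀ δ ∈ (derSet j).filter (fun δ => excC δ = k),
        j.choose (excC δ) = j.choose k := by
      intro δ hδ
      rw [Finset.mem_filter] at hδ
      rw [hδ.2]
    rw [Finset.sum_congr rfl this, Finset.sum_const, smul_eq_mul, ← dExc, Nat.mul_comm]
  -- the left-hand side
  have hL : (Nat.card {σ : ℤ → ℤ // IsBoundedAffinePerm N σ} : ℤ)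
      = ∑ j ∈ range (N+1), (N.choose j : ℤ)
          * ∑ k ∈ range (N+1), (dExc j k : ℤ) * (j.choose k : ℤ) := by
    rw [card_bap N hN, count_filter_bapCond N]
    rw [groupG (m := N) (fun j k => j.choose k)]
    have : (∑ j ∈ range (N+1), N.choose j * ∑ δ ∈ derSet j, (j.choose (excC δ)))
        = ∑ j ∈ range (N+1), N.choose j * ∑ k ∈ range (N+1), dExc j k * j.choose k := by
      refine Finset.sum_congr rfl fun j hj => ?_
      rw [Finset.mem_range] at hj
      rw [hinner j (by omega)]
    rw [this]
    push_cast
    rfl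
  rw [hL]
  -- now massage the right-hand side
  have e1 : ∀ m ∈ range (N+1),
      (N.choose m : ℤ) * (∑ k ∈ range (m+1),
          (m.choose (N-k) : ℤ) * (-1:ℤ)^(N-m) * (eulerianExc m k : ℤ))
      = (N.choose m : ℤ) * (∑ k ∈ range (N+1),
          (m.choose (N-k) : ℤ) * (-1:ℤ)^(N-m) * (eulerianExc m k : ℤ)) := by
    intro m hm
    rw [Finset.mem_range] at hm
    congr 1
    apply Finset.sum_subset (Finset.range_subset_range.2 (by omega))
    intro k hk hk'
    rw [Finset.mem_range] at hk hk'
    have : m < k := by omega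
    rw [eulerianExc_eq_zero this]
    push_cast
    ring
  have e2 : ∀ m k : ℕ, m ≤ N → (eulerianExc m k : ℤ)
      = ∑ j ∈ range (N+1), (m.choose j : ℤ) * (dExc j k : ℤ) := by
    intro m k hm
    have h1 : eulerianExc m k = ∑ j ∈ range (N+1), (m.choose j) * dExc j k := by
      rw [C1 m k]
      apply Finset.sum_subset (Finset.range_subset_range.2 (by omega))
      intro j hj hj'
      rw [Finset.mem_range] at hj hj'
      rw [Nat.choose_eq_zero_of_lt (by omega)]
      ring
    rw [h1]
    push_cast
    rfl
  have e3 : ∀ m ∈ range (N+1),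
      (N.choose m : ℤ) * (∑ k ∈ range (N+1),
          (m.choose (N-k) : ℤ) * (-1:ℤ)^(N-m) * (eulerianExc m k : ℤ))
      = ∑ k ∈ range (N+1), ∑ j ∈ range (N+1),
          (-1:ℤ)^(N-m) * (N.choose m : ℤ) * (m.choose j : ℤ) * (m.choose (N-k) : ℤ)
            * (dExc j k : ℤ) := by
    intro m hm
    rw [Finset.mem_range] at hm
    rw [Finset.mul_sum]
    refine Finset.sum_congr rfl fun k _ => ?_
    rw [e2 m k (by omega), Finset.mul_sum, Finset.mul_sum]
    refine Finset.sum_congr rfl fun j _ => ?_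
    ring
  rw [Finset.sum_congr rfl e1, Finset.sum_congr rfl e3]
  -- swap summation orders
  rw [Finset.sum_comm]
  have e4 : ∀ k ∈ range (N+1),
      (∑ m ∈ range (N+1), ∑ j ∈ range (N+1),
          (-1:ℤ)^(N-m) * (N.choose m : ℤ) * (m.choose j : ℤ) * (m.choose (N-k) : ℤ)
            * (dExc j k : ℤ))
      = ∑ j ∈ range (N+1), (N.choose j : ℤ) * (j.choose k : ℤ) * (dExc j k : ℤ) := by
    intro k hk
    rw [Finset.mem_range] at hk
    rw [Finset.sum_comm]
    refine Finset.sum_congr rfl fun j hj => ?_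
    rw [Finset.mem_range] at hj
    have : (∑ m ∈ range (N+1),
        (-1:ℤ)^(N-m) * (N.choose m : ℤ) * (m.choose j : ℤ) * (m.choose (N-k) : ℤ)
          * (dExc j k : ℤ))
        = (∑ m ∈ range (N+1),
        (-1:ℤ)^(N-m) * (N.choose m : ℤ) * (m.choose j : ℤ) * (m.choose (N-k) : ℤ))
          * (dExc j k : ℤ) := by
      rw [Finset.sum_mul]
    rw [this, keyIdent N j k (by omega) (by omega)]
  rw [Finset.sum_congr rfl e4, Finset.sum_comm]
  refine (Finset.sum_congr rfl fun j _ => ?_).symm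
  rw [Finset.mul_sum]
  refine Finset.sum_congr rfl fun k _ => ?_
  ring
end

section
/- Fix an integer k ≥ 2 and α ∈ (0, 1/k). For every N, the sum of C(N; n_1,…,n_k)² over all tuples (n_1,…,n_k) of nonnegative integers with n_1+⋯+n_k = N and |n_i − N/k| > αN for some i, is at most 4 k^{2N+2} e^{−4Nα²}. -/
open scoped Classical

open Finset

section Aux

lemma hoeffding_pt (p : ℝ) (hp : 0 < p) (hp1 : p < 1) (t : ℝ) :
    (1 - p) + p * Real.exp t ≤ Real.exp (t * p + t ^ 2 / 8) := by
  set q : ℝ := 1 - p with hq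
  have hq0 : 0 < q := by simp [hq]; linarith
  have hpos : ∀ x : ℝ, 0 < q + p * Real.exp x := fun x => by positivity
  set g : ℝ → ℝ := fun x => p * Real.exp x / (q + p * Real.exp x) with hgdef
  set F : ℝ → ℝ := fun x => x * p + x ^ 2 / 8 - Real.log (q + p * Real.exp x) with hFdef
  set F' : ℝ → ℝ := fun x => p + x / 4 - g x with hF'def
  have hden : ∀ x : ℝ, HasDerivAt (fun x => q + p * Real.exp x) (p * Real.exp x) x := by
    intro x
    exact ((Real.hasDerivAt_exp x).const_mul p).const_add q
  have hF : ∀ x, HasDerivAt F (F' x) x := by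
    intro x
    have h1 : HasDerivAt (fun x : ℝ => x * p) p x := (hasDerivAt_id x).mul_const p |>.congr_deriv (by ring)
    have h2 : HasDerivAt (fun x : ℝ => x ^ 2 / 8) (x / 4) x := by
      have := (hasDerivAt_pow 2 x).div_const 8
      convert this using 1
      · rfl
      · rfl
      ring
    have h3 : HasDerivAt (fun x => Real.log (q + p * Real.exp x)) (g x) x := by
      have := (hden x).log (hpos x).ne'
      exact this
    exact (h1.add h2).sub h3
  have hF' : ∀ x, HasDerivAt F' (1/4 - p * Real.exp x * q / (q + p * Real.exp x) ^ 2) x := by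
    intro x
    have hu : HasDerivAt (fun x => p * Real.exp x) (p * Real.exp x) x :=
      (Real.hasDerivAt_exp x).const_mul p
    have hg : HasDerivAt g
        ((p * Real.exp x * (q + p * Real.exp x) - p * Real.exp x * (p * Real.exp x))
          / (q + p * Real.exp x) ^ 2) x := hu.div (hden x) (hpos x).ne'
    have h1 : HasDerivAt (fun x : ℝ => p + x / 4) (1/4) x := by
      have h := ((hasDerivAt_id x).div_const 4).const_add p
      convert h using 1
      · rfl
      · rfl
      rfl
    have := h1.sub hg
    convert this using 1
    · rfl
    · rfl
    · rfl
    field_simp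
    ring
  have hF'mono : Monotone F' := by
    apply monotone_of_deriv_nonneg
    · exact fun x => (hF' x).differentiableAt
    · intro x
      rw [(hF' x).deriv]
      have hx : 0 < q + p * Real.exp x := hpos x
      have h4 : p * Real.exp x * q / (q + p * Real.exp x) ^ 2 ≤ 1/4 := by
        rw [div_le_iff₀ (by positivity)]
        nlinarith [sq_nonneg (q - p * Real.exp x), Real.exp_pos x]
      linarith
  have hqp : q + p = 1 := by rw [hq]; ring
  have hF'0 : F' 0 = 0 := by
    simp only [hF'def, hgdef, Real.exp_zero, mul_one, hqp]
    field_simp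
    ring
  have hF0 : F 0 = 0 := by
    simp only [hFdef, Real.exp_zero, mul_one, hqp, Real.log_one]
    norm_num
  have hFnonneg : ∀ x, 0 ≤ F x := by
    intro x
    have hdiff : Differentiable ℝ F := fun x => (hF x).differentiableAt
    rcases le_total 0 x with hx | hx
    · have : MonotoneOn F (Set.Ici 0) := by
        apply monotoneOn_of_deriv_nonneg (convex_Ici 0) hdiff.continuous.continuousOn
          (hdiff.differentiableOn)
        intro y hy
        rw [interior_Ici] at hy
        rw [(hF y).deriv]
        have := hF'mono (le_of_lt hy)
        rw [hF'0] at this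
        linarith
      have := this (Set.self_mem_Ici) (Set.mem_Ici.2 hx) hx
      rw [hF0] at this
      exact this
    · have : AntitoneOn F (Set.Iic 0) := by
        apply antitoneOn_of_deriv_nonpos (convex_Iic 0) hdiff.continuous.continuousOn
          (hdiff.differentiableOn)
        intro y hy
        rw [interior_Iic] at hy
        rw [(hF y).deriv]
        have := hF'mono (le_of_lt hy)
        rw [hF'0] at this
        linarith
      have := this (Set.mem_Iic.2 hx) (Set.self_mem_Iic) hx
      rw [hF0] at this
      exact this
  have hlog : Real.log (q + p * Real.exp t) ≤ t * p + t ^ 2 / 8 := by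
    have := hFnonneg t
    simp only [hFdef] at this
    linarith
  calc q + p * Real.exp t = Real.exp (Real.log (q + p * Real.exp t)) :=
        (Real.exp_log (hpos t)).symm
    _ ≤ Real.exp (t * p + t ^ 2 / 8) := Real.exp_le_exp.2 hlog


lemma binom_sum (c x : ℝ) (N : ℕ) :
    ∑ j ∈ Finset.range (N + 1), (N.choose j : ℝ) * x ^ j * c ^ (N - j) = (x + c) ^ N := by
  rw [add_pow]
  exact Finset.sum_congr rfl fun j _ => by ring

lemma mgf_bound (k : ℕ) (hk : 2 ≤ k) (t : ℝ) (N : ℕ) :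
    (Real.exp t + ((k : ℝ) - 1)) ^ N ≤ (k : ℝ) ^ N * Real.exp (N * (t * (1/k) + t ^ 2 / 8)) := by
  have hk2 : (2:ℝ) ≤ (k:ℝ) := by exact_mod_cast hk
  have hk0 : (0:ℝ) < k := by linarith
  have hp : (0:ℝ) < 1/k := by positivity
  have hp1 : (1:ℝ)/k < 1 := by rw [div_lt_one hk0]; linarith
  have h := hoeffding_pt (1/k) hp hp1 t
  have key : Real.exp t + ((k:ℝ) - 1) ≤ (k:ℝ) * Real.exp (t * (1/k) + t ^ 2 / 8) := by
    have h2 := mul_le_mul_of_nonneg_left h (le_of_lt hk0)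
    have e : (k:ℝ) * ((1 - 1/k) + (1/k) * Real.exp t) = Real.exp t + ((k:ℝ) - 1) := by
      field_simp
      ring
    rw [e] at h2
    exact h2
  have hnn : (0:ℝ) ≤ Real.exp t + ((k:ℝ) - 1) := by
    have := Real.exp_pos t; linarith
  calc (Real.exp t + ((k:ℝ) - 1)) ^ N ≤ ((k:ℝ) * Real.exp (t * (1/k) + t ^ 2 / 8)) ^ N :=
        pow_le_pow_left₀ hnn key N
    _ = (k:ℝ) ^ N * Real.exp (N * (t * (1/k) + t ^ 2 / 8)) := by
        rw [mul_pow, ← Real.exp_nat_mul]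

lemma multinomial_le_card_pow {α : Type*} [DecidableEq α] (s : Finset α) (f : α → ℕ) :
    Nat.multinomial s f ≤ s.card ^ (∑ i ∈ s, f i) := by
  induction s using Finset.cons_induction with
  | empty => simp
  | cons a s ha ih =>
    rw [Nat.multinomial_cons, Finset.sum_cons, Finset.card_cons]
    have key : (f a + ∑ i ∈ s, f i).choose (f a) * s.card ^ (∑ i ∈ s, f i)
        ≤ (s.card + 1) ^ (f a + ∑ i ∈ s, f i) := by
      set n := f a + ∑ i ∈ s, f i with hn
      set S := ∑ i ∈ s, f i with hS
      have hmem : S ∈ Finset.range (n + 1) := Finset.mem_range.2 (by omega)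
      have h1 : n.choose (f a) * s.card ^ S
          = s.card ^ S * 1 ^ (n - S) * n.choose S := by
        rw [one_pow, mul_one, Nat.choose_symm_add, mul_comm]
      rw [h1, add_pow]
      exact Finset.single_le_sum (f := fun j => s.card ^ j * 1 ^ (n - j) * n.choose j)
        (fun i _ => Nat.zero_le _) hmem
    calc (f a + ∑ i ∈ s, f i).choose (f a) * Nat.multinomial s f
        ≤ (f a + ∑ i ∈ s, f i).choose (f a) * s.card ^ (∑ i ∈ s, f i) :=
          Nat.mul_le_mul_left _ ih
      _ ≤ (s.card + 1) ^ (f a + ∑ i ∈ s, f i) := key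

lemma multinomial_le_choose (k N : ℕ) (f : Fin k → ℕ) (hf : ∑ j, f j = N) (i : Fin k) :
    Nat.multinomial Finset.univ f ≤ N.choose (f i) * (k - 1) ^ (N - f i) := by
  have hsum : f i + ∑ j ∈ Finset.univ.erase i, f j = N := by
    rw [Finset.add_sum_erase _ f (Finset.mem_univ i)]
    exact hf
  have hcard : (Finset.univ.erase i).card = k - 1 := by
    rw [Finset.card_erase_of_mem (Finset.mem_univ i)]
    simp
  calc Nat.multinomial Finset.univ f
      = (f i + ∑ j ∈ Finset.univ.erase i, f j).choose (f i)
        * Nat.multinomial (Finset.univ.erase i) f := by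
        have h := Nat.multinomial_insert (Finset.notMem_erase i Finset.univ) f
        rwa [Finset.insert_erase (Finset.mem_univ i)] at h
    _ ≤ N.choose (f i) * (k - 1) ^ (N - f i) := by
        rw [hsum]
        refine Nat.mul_le_mul_left _ ?_
        have := multinomial_le_card_pow (Finset.univ.erase i) f
        rwa [hcard, show ∑ j ∈ Finset.univ.erase i, f j = N - f i by omega] at this

lemma sum_mult_pow (k N : ℕ) (i : Fin k) (x : ℝ) :
    ∑ f ∈ Finset.Nat.antidiagonalTuple k N,
      (Nat.multinomial Finset.univ f : ℝ) * x ^ (f i) = (x + ((k : ℝ) - 1)) ^ N := by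
  have h := Finset.sum_pow_eq_sum_piAntidiag (Finset.univ : Finset (Fin k))
    (fun j => if j = i then x else 1) N
  rw [Finset.piAntidiag_univ_fin_eq_antidiagonalTuple] at h
  have hsum : (∑ j : Fin k, if j = i then x else 1) = x + ((k : ℝ) - 1) := by
    have h1 : ∀ j : Fin k, (if j = i then x else 1) = (if j = i then x - 1 else 0) + 1 := by
      intro j; split <;> ring
    rw [Finset.sum_congr rfl (fun j _ => h1 j), Finset.sum_add_distrib,
      Finset.sum_ite_eq' Finset.univ i (fun _ => x - 1)]
    simp [mul_comm]
    ring
  have hprod : ∀ f : Fin k → ℕ,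
      (∏ j : Fin k, (if j = i then x else 1) ^ f j) = x ^ f i := by
    intro f
    have := Finset.prod_eq_single (f := fun j => (if j = i then x else 1) ^ f j) i
      (fun j _ hj => by simp [hj]) (fun h => absurd (Finset.mem_univ i) h)
    simpa using this
  rw [hsum] at h
  rw [h]
  exact Finset.sum_congr rfl fun f _ => by rw [hprod f]

lemma term_bound (k N m : ℕ) (hk : 2 ≤ k) (hm : m ≤ N) (t s : ℝ)
    (h : 0 ≤ t * ((m : ℝ) - s)) :
    (N.choose m : ℝ) * ((k : ℝ) - 1) ^ (N - m)
      ≤ (k : ℝ) ^ N * Real.exp (N * (t * (1/k) + t ^ 2 / 8) - t * s) := by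
  have hk2 : (2:ℝ) ≤ (k:ℝ) := by exact_mod_cast hk
  have hc : (0:ℝ) ≤ (k:ℝ) - 1 := by linarith
  have step1 : (N.choose m : ℝ) * ((k:ℝ) - 1) ^ (N - m)
      ≤ (N.choose m : ℝ) * ((k:ℝ) - 1) ^ (N - m) * Real.exp (t * ((m:ℝ) - s)) :=
    le_mul_of_one_le_right (by positivity) (Real.one_le_exp h)
  have e1 : Real.exp (t * ((m:ℝ) - s)) = (Real.exp t) ^ m * Real.exp (-(t * s)) := by
    rw [← Real.exp_nat_mul, ← Real.exp_add]
    ring_nf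
  have step2 : (N.choose m : ℝ) * ((k:ℝ) - 1) ^ (N - m) * (Real.exp t) ^ m
      ≤ (Real.exp t + ((k:ℝ) - 1)) ^ N := by
    have hmem : m ∈ Finset.range (N + 1) := Finset.mem_range.2 (by omega)
    have hs := Finset.single_le_sum
      (f := fun j => (N.choose j : ℝ) * (Real.exp t) ^ j * ((k:ℝ) - 1) ^ (N - j))
      (fun j _ => by positivity) hmem
    rw [binom_sum] at hs
    calc (N.choose m : ℝ) * ((k:ℝ) - 1) ^ (N - m) * (Real.exp t) ^ m
        = (N.choose m : ℝ) * (Real.exp t) ^ m * ((k:ℝ) - 1) ^ (N - m) := by ring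
      _ ≤ (Real.exp t + ((k:ℝ) - 1)) ^ N := hs
  calc (N.choose m : ℝ) * ((k:ℝ) - 1) ^ (N - m)
      ≤ (N.choose m : ℝ) * ((k:ℝ) - 1) ^ (N - m) * Real.exp (t * ((m:ℝ) - s)) := step1
    _ = (N.choose m : ℝ) * ((k:ℝ) - 1) ^ (N - m) * (Real.exp t) ^ m * Real.exp (-(t * s)) := by
        rw [e1]; ring
    _ ≤ (Real.exp t + ((k:ℝ) - 1)) ^ N * Real.exp (-(t * s)) :=
        mul_le_mul_of_nonneg_right step2 (Real.exp_pos _).le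
    _ ≤ ((k:ℝ) ^ N * Real.exp (N * (t * (1/k) + t ^ 2 / 8))) * Real.exp (-(t * s)) :=
        mul_le_mul_of_nonneg_right (mgf_bound k hk t N) (Real.exp_pos _).le
    _ = (k:ℝ) ^ N * Real.exp (N * (t * (1/k) + t ^ 2 / 8) - t * s) := by
        rw [mul_assoc, ← Real.exp_add]; ring_nf

lemma sum_bound (k N : ℕ) (hk : 2 ≤ k) (i : Fin k) (t s : ℝ) (P : (Fin k → ℕ) → Prop)
    (hP : ∀ f, P f → 0 ≤ t * ((f i : ℝ) - s)) :
    ∑ f ∈ (Finset.Nat.antidiagonalTuple k N).filter P,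
        (Nat.multinomial Finset.univ f : ℝ)
      ≤ (k : ℝ) ^ N * Real.exp (N * (t * (1/k) + t ^ 2 / 8) - t * s) := by
  have step1 : ∑ f ∈ (Finset.Nat.antidiagonalTuple k N).filter P,
        (Nat.multinomial Finset.univ f : ℝ)
      ≤ ∑ f ∈ (Finset.Nat.antidiagonalTuple k N).filter P,
        (Nat.multinomial Finset.univ f : ℝ) * Real.exp (t * ((f i : ℝ) - s)) :=
    Finset.sum_le_sum fun f hf =>
      le_mul_of_one_le_right (Nat.cast_nonneg _)
        (Real.one_le_exp (hP f (Finset.mem_filter.1 hf).2))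
  have step2 : ∑ f ∈ (Finset.Nat.antidiagonalTuple k N).filter P,
        (Nat.multinomial Finset.univ f : ℝ) * Real.exp (t * ((f i : ℝ) - s))
      ≤ ∑ f ∈ Finset.Nat.antidiagonalTuple k N,
        (Nat.multinomial Finset.univ f : ℝ) * Real.exp (t * ((f i : ℝ) - s)) :=
    Finset.sum_le_sum_of_subset_of_nonneg (Finset.filter_subset _ _)
      (fun f _ _ => by positivity)
  have step3 : ∑ f ∈ Finset.Nat.antidiagonalTuple k N,
        (Nat.multinomial Finset.univ f : ℝ) * Real.exp (t * ((f i : ℝ) - s))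
      = (∑ f ∈ Finset.Nat.antidiagonalTuple k N,
          (Nat.multinomial Finset.univ f : ℝ) * (Real.exp t) ^ (f i)) * Real.exp (-(t * s)) := by
    rw [Finset.sum_mul]
    refine Finset.sum_congr rfl fun f _ => ?_
    rw [mul_assoc, ← Real.exp_nat_mul, ← Real.exp_add]
    ring_nf
  calc _ ≤ _ := step1
    _ ≤ _ := step2
    _ = (∑ f ∈ Finset.Nat.antidiagonalTuple k N,
          (Nat.multinomial Finset.univ f : ℝ) * (Real.exp t) ^ (f i)) * Real.exp (-(t * s)) :=
        step3
    _ = (Real.exp t + ((k:ℝ) - 1)) ^ N * Real.exp (-(t * s)) := by rw [sum_mult_pow]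
    _ ≤ ((k:ℝ) ^ N * Real.exp (N * (t * (1/k) + t ^ 2 / 8))) * Real.exp (-(t * s)) :=
        mul_le_mul_of_nonneg_right (mgf_bound k hk t N) (Real.exp_pos _).le
    _ = (k:ℝ) ^ N * Real.exp (N * (t * (1/k) + t ^ 2 / 8) - t * s) := by
        rw [mul_assoc, ← Real.exp_add]; ring_nf

lemma sq_tail (k N : ℕ) (hk : 2 ≤ k) (i : Fin k) (t s : ℝ) (P : (Fin k → ℕ) → Prop)
    (hP : ∀ f, P f → 0 ≤ t * ((f i : ℝ) - s)) :
    ∑ f ∈ (Finset.Nat.antidiagonalTuple k N).filter P,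
        (Nat.multinomial Finset.univ f : ℝ) ^ 2
      ≤ ((k : ℝ) ^ N * Real.exp (N * (t * (1/k) + t ^ 2 / 8) - t * s)) ^ 2 := by
  set B : ℝ := (k : ℝ) ^ N * Real.exp (N * (t * (1/k) + t ^ 2 / 8) - t * s) with hB
  have hBnn : 0 ≤ B := by positivity
  have hk1 : 1 ≤ k := by omega
  have hptw : ∀ f ∈ (Finset.Nat.antidiagonalTuple k N).filter P,
      (Nat.multinomial Finset.univ f : ℝ) ≤ B := by
    intro f hf
    obtain ⟨hfA, hfP⟩ := Finset.mem_filter.1 hf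
    have hfsum : ∑ j, f j = N := (Finset.Nat.mem_antidiagonalTuple).1 hfA
    have hfiN : f i ≤ N := by
      have := Finset.single_le_sum (f := f) (fun j _ => Nat.zero_le _) (Finset.mem_univ i)
      omega
    have h1 : (Nat.multinomial Finset.univ f : ℝ)
        ≤ (N.choose (f i) : ℝ) * ((k:ℝ) - 1) ^ (N - f i) := by
      have := multinomial_le_choose k N f hfsum i
      have hcast : ((N.choose (f i) * (k - 1) ^ (N - f i) : ℕ) : ℝ)
          = (N.choose (f i) : ℝ) * ((k:ℝ) - 1) ^ (N - f i) := by
        push_cast [Nat.cast_sub hk1]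
        ring
      calc (Nat.multinomial Finset.univ f : ℝ)
          ≤ ((N.choose (f i) * (k - 1) ^ (N - f i) : ℕ) : ℝ) := by exact_mod_cast this
        _ = _ := hcast
    exact h1.trans (term_bound k N (f i) hk hfiN t s (hP f hfP))
  calc ∑ f ∈ (Finset.Nat.antidiagonalTuple k N).filter P,
        (Nat.multinomial Finset.univ f : ℝ) ^ 2
      ≤ ∑ f ∈ (Finset.Nat.antidiagonalTuple k N).filter P,
        B * (Nat.multinomial Finset.univ f : ℝ) := by
        refine Finset.sum_le_sum fun f hf => ?_
        rw [sq]
        exact mul_le_mul_of_nonneg_right (hptw f hf) (Nat.cast_nonneg _)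
    _ = B * ∑ f ∈ (Finset.Nat.antidiagonalTuple k N).filter P,
        (Nat.multinomial Finset.univ f : ℝ) := (Finset.mul_sum _ _ _).symm
    _ ≤ B * B := mul_le_mul_of_nonneg_left (sum_bound k N hk i t s P hP) hBnn
    _ = B ^ 2 := (sq B).symm

end Aux

/-- Hoeffding tail bound: the contribution of unbalanced compositions to the
sum of squared multinomial coefficients. -/
theorem stmt_7 (k : ℕ) (hk : 2 ≤ k) (α : ℝ) (hα : 0 < α) (hα2 : α < 1 / k) (N : ℕ) :
    ∑ f ∈ (Finset.Nat.antidiagonalTuple k N).filter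
        (fun f => ∃ i : Fin k, |(f i : ℝ) - (N : ℝ) / k| > α * N),
      ((Nat.multinomial (Finset.univ : Finset (Fin k)) f : ℝ)) ^ 2
    ≤ 4 * (k : ℝ) ^ (2 * N + 2) * Real.exp (-4 * N * α ^ 2) := by
  set A := Finset.Nat.antidiagonalTuple k N with hA
  set T : (Fin k → ℕ) → ℝ := fun f => (Nat.multinomial Finset.univ f : ℝ) ^ 2 with hT
  set sp : ℝ := (N : ℝ) / k + α * N with hsp
  set sm : ℝ := (N : ℝ) / k - α * N with hsm
  set Pp : Fin k → (Fin k → ℕ) → Prop := fun i f => 0 ≤ (4 * α) * ((f i : ℝ) - sp) with hPp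
  set Pm : Fin k → (Fin k → ℕ) → Prop := fun i f => 0 ≤ (-(4 * α)) * ((f i : ℝ) - sm) with hPm
  have hTnn : ∀ f, 0 ≤ T f := fun f => sq_nonneg _
  -- the per-coordinate tail bounds
  have hEp : (N : ℝ) * ((4 * α) * (1/k) + (4 * α) ^ 2 / 8) - (4 * α) * sp
      = -(2 * N * α ^ 2) := by
    rw [hsp]; field_simp; ring
  have hEm : (N : ℝ) * ((-(4 * α)) * (1/k) + (-(4 * α)) ^ 2 / 8) - (-(4 * α)) * sm
      = -(2 * N * α ^ 2) := by
    rw [hsm]; field_simp; ring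
  have hBp : ∀ i : Fin k, ∑ f ∈ A.filter (Pp i), T f
      ≤ ((k : ℝ) ^ N * Real.exp (-(2 * N * α ^ 2))) ^ 2 := by
    intro i
    have := sq_tail k N hk i (4 * α) sp (Pp i) (fun f hf => hf)
    rwa [hEp] at this
  have hBm : ∀ i : Fin k, ∑ f ∈ A.filter (Pm i), T f
      ≤ ((k : ℝ) ^ N * Real.exp (-(2 * N * α ^ 2))) ^ 2 := by
    intro i
    have := sq_tail k N hk i (-(4 * α)) sm (Pm i) (fun f hf => hf)
    rwa [hEm] at this
  set B2 : ℝ := ((k : ℝ) ^ N * Real.exp (-(2 * N * α ^ 2))) ^ 2 with hB2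
  -- union bound
  set Af := A.filter (fun f => ∃ i : Fin k, |(f i : ℝ) - (N : ℝ) / k| > α * N) with hAf
  have key : ∀ f ∈ Af, T f
      ≤ ∑ i : Fin k, ((if Pp i f then T f else 0) + (if Pm i f then T f else 0)) := by
    intro f hf
    obtain ⟨hfA, ⟨i, hi⟩⟩ := Finset.mem_filter.1 hf
    have hone : T f ≤ (if Pp i f then T f else 0) + (if Pm i f then T f else 0) := by
      rcases lt_abs.1 hi with h | h
      · have hp : Pp i f := by
          rw [hPp]
          have : (0:ℝ) < (f i : ℝ) - sp := by rw [hsp]; linarith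
          positivity
        rw [if_pos hp]
        have : (0:ℝ) ≤ (if Pm i f then T f else 0) := by
          split
          · exact hTnn f
          · exact le_refl 0
        linarith
      · have hm : Pm i f := by
          rw [hPm]
          have h1 : (f i : ℝ) - sm < 0 := by rw [hsm]; linarith
          nlinarith [mul_pos (show (0:ℝ) < 4*α by linarith)
            (show (0:ℝ) < -((f i : ℝ) - sm) by linarith)]
        rw [if_pos hm]
        have : (0:ℝ) ≤ (if Pp i f then T f else 0) := by
          split
          · exact hTnn f
          · exact le_refl 0
        linarith
    refine hone.trans ?_
    refine Finset.single_le_sum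
      (f := fun i => (if Pp i f then T f else 0) + (if Pm i f then T f else 0))
      (fun j _ => ?_) (Finset.mem_univ i)
    have h1 : (0:ℝ) ≤ (if Pp j f then T f else 0) := by split; exacts [hTnn f, le_refl 0]
    have h2 : (0:ℝ) ≤ (if Pm j f then T f else 0) := by split; exacts [hTnn f, le_refl 0]
    exact add_nonneg h1 h2
  have hunion : ∑ f ∈ Af, T f ≤ (k : ℝ) * (2 * B2) := by
    calc ∑ f ∈ Af, T f
        ≤ ∑ f ∈ Af, ∑ i : Fin k,
            ((if Pp i f then T f else 0) + (if Pm i f then T f else 0)) :=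
          Finset.sum_le_sum key
      _ = ∑ i : Fin k, ∑ f ∈ Af,
            ((if Pp i f then T f else 0) + (if Pm i f then T f else 0)) :=
          Finset.sum_comm
      _ ≤ ∑ i : Fin k, (2 * B2) := by
          refine Finset.sum_le_sum fun i _ => ?_
          rw [Finset.sum_add_distrib, ← Finset.sum_filter, ← Finset.sum_filter]
          have hsub1 : Af.filter (Pp i) ⊆ A.filter (Pp i) := by
            intro x hx
            simp only [hAf, Finset.mem_filter] at hx ⊢
            exact ⟨hx.1.1, hx.2⟩
          have hsub2 : Af.filter (Pm i) ⊆ A.filter (Pm i) := by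
            intro x hx
            simp only [hAf, Finset.mem_filter] at hx ⊢
            exact ⟨hx.1.1, hx.2⟩
          have h1 : ∑ f ∈ Af.filter (Pp i), T f ≤ B2 :=
            le_trans (Finset.sum_le_sum_of_subset_of_nonneg hsub1 (fun f _ _ => hTnn f)) (hBp i)
          have h2 : ∑ f ∈ Af.filter (Pm i), T f ≤ B2 :=
            le_trans (Finset.sum_le_sum_of_subset_of_nonneg hsub2 (fun f _ _ => hTnn f)) (hBm i)
          linarith
      _ = (k : ℝ) * (2 * B2) := by
          rw [Finset.sum_const, Finset.card_univ, Fintype.card_fin, nsmul_eq_mul]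
  -- final arithmetic
  have hB2eq : B2 = (k : ℝ) ^ (2 * N) * Real.exp (-4 * N * α ^ 2) := by
    rw [hB2, mul_pow, ← pow_mul, Nat.mul_comm N 2, sq (Real.exp _), ← Real.exp_add]
    congr 1
    ring
  have hk2 : (2:ℝ) ≤ (k:ℝ) := by exact_mod_cast hk
  have hpow : (0:ℝ) ≤ (k:ℝ) ^ (2 * N) := by positivity
  have h1 : 2 * (k:ℝ) * ((k:ℝ) ^ (2 * N)) ≤ 4 * (k:ℝ) ^ (2 * N + 2) := by
    have he : (k:ℝ) ^ (2 * N + 2) = (k:ℝ) ^ (2 * N) * (k:ℝ) * (k:ℝ) := by ring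
    rw [he]
    nlinarith [mul_nonneg hpow (show (0:ℝ) ≤ 4 * (k:ℝ) * (k:ℝ) - 2 * (k:ℝ) by nlinarith)]
  calc ∑ f ∈ Af, T f ≤ (k : ℝ) * (2 * B2) := hunion
    _ = (2 * (k:ℝ) * ((k:ℝ) ^ (2 * N))) * Real.exp (-4 * N * α ^ 2) := by
        rw [hB2eq]; ring
    _ ≤ (4 * (k:ℝ) ^ (2 * N + 2)) * Real.exp (-4 * N * α ^ 2) :=
        mul_le_mul_of_nonneg_right h1 (Real.exp_pos _).le
    _ = 4 * (k:ℝ) ^ (2 * N + 2) * Real.exp (-4 * N * α ^ 2) := by ring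
end

section
/- For fixed k ≥ 1, let Z(n,…,n) be the number of k-tuples (Δ_1,…,Δ_k) of integers with |Δ_i| ≤ n for all i and ∑_{i=1}^k Δ_i = 0. Then lim_{n→∞} Z(n,…,n)/n^{k−1} = (1/(k−1)!) ∑_{j=0}^{⌊k/2⌋} (−1)^j C(k,j) (k−2j)^{k−1}. -/
open Finset PowerSeries Filter Nat

private noncomputable def toL (k n : ℕ) (Δ : Fin k → ℤ) : ℕ →₀ ℕ :=
  Finsupp.onFinset (Finset.range k)
    (fun x => if h : x < k then (Δ ⟨x, h⟩ + n).toNat else 0)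
    (fun x hx => Finset.mem_range.mpr (by by_contra hc; exact hx (dif_neg hc)))
private lemma toL_apply (k n : ℕ) (Δ : Fin k → ℤ) (i : Fin k) :
    toL k n Δ (i : ℕ) = (Δ i + n).toNat := by
  simp only [toL, Finsupp.onFinset_apply, i.2, dif_pos, Fin.eta]

private lemma toL_sum (k n : ℕ) (Δ : Fin k → ℤ) :
    (Finset.range k).sum (toL k n Δ) = ∑ i : Fin k, (Δ i + n).toNat := by
  rw [Finset.sum_range fun x => toL k n Δ x]
  exact Finset.sum_congr rfl fun i _ => toL_apply k n Δ i

lemma coeff_geom (m d : ℕ) :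
    (PowerSeries.coeff (R := ℤ) d) (∑ i ∈ Finset.range m, (PowerSeries.X : ℤ⟦X⟧) ^ i) =
      if d < m then 1 else 0 := by
  rw [map_sum]
  simp_rw [PowerSeries.coeff_X_pow]
  rw [Finset.sum_ite_eq]
  simp [Finset.mem_range]

lemma card_eq_filter (k n : ℕ) :
    Nat.card {Δ : Fin k → ℤ // (∀ i, |Δ i| ≤ (n : ℤ)) ∧ ∑ i, Δ i = 0} =
    ((Finset.finsuppAntidiag (Finset.range k) (k*n)).filter
      (fun l => ∀ i ∈ Finset.range k, l i < 2*n+1)).card := by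
  rw [← Nat.card_eq_finsetCard]
  apply Nat.card_congr
  have key : ∀ (Δ : Fin k → ℤ), (∀ i, |Δ i| ≤ (n : ℤ)) → (∑ i, Δ i = 0) →
      toL k n Δ ∈ ((Finset.finsuppAntidiag (Finset.range k) (k*n)).filter
        (fun l => ∀ i ∈ Finset.range k, l i < 2*n+1)) := by
    intro Δ h1 h2
    have hpos : ∀ i : Fin k, (0 : ℤ) ≤ Δ i + n := fun i => by
      have := (abs_le.mp (h1 i)).1; linarith
    rw [Finset.mem_filter, Finset.mem_finsuppAntidiag]
    refine ⟨⟨?_, Finsupp.support_onFinset_subset⟩, ?_⟩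
    · rw [toL_sum]
      have : (((∑ i : Fin k, (Δ i + n).toNat : ℕ)) : ℤ) = ((k*n : ℕ) : ℤ) := by
        push_cast
        rw [Finset.sum_congr rfl fun i _ => Int.toNat_of_nonneg (hpos i)]
        rw [Finset.sum_add_distrib, h2]
        simp [mul_comm]
      exact_mod_cast this
    · intro x hx
      have : toL k n Δ x = (Δ ⟨x, Finset.mem_range.mp hx⟩ + n).toNat :=
        toL_apply k n Δ ⟨x, Finset.mem_range.mp hx⟩
      rw [this]
      have hle := (abs_le.mp (h1 ⟨x, Finset.mem_range.mp hx⟩)).2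
      omega
  refine ⟨fun d => ⟨toL k n d.1, key d.1 d.2.1 d.2.2⟩,
    fun l => ⟨fun i => ((l : ℕ →₀ ℕ) i : ℤ) - n, ?_, ?_⟩, ?_, ?_⟩
  · -- abs bound
    intro i
    obtain ⟨hmem, hb⟩ := Finset.mem_filter.mp l.2
    have := hb i (Finset.mem_range.mpr i.2)
    refine abs_le.mpr ⟨?_, ?_⟩ <;> simp only <;> omega
  · -- sum zero
    obtain ⟨hmem, hb⟩ := Finset.mem_filter.mp l.2
    obtain ⟨hsum, hsupp⟩ := Finset.mem_finsuppAntidiag.mp hmem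
    have hs : (∑ i : Fin k, ((l : ℕ →₀ ℕ) i : ℤ)) = ((k * n : ℕ) : ℤ) := by
      calc ∑ i : Fin k, (((l : ℕ →₀ ℕ) i : ℤ))
          = ∑ x ∈ Finset.range k, (((l : ℕ →₀ ℕ) x : ℤ)) :=
            (Finset.sum_range fun x => (((l : ℕ →₀ ℕ) x : ℤ))).symm
        _ = (((Finset.range k).sum (l : ℕ →₀ ℕ) : ℕ) : ℤ) := by rw [Nat.cast_sum]
        _ = ((k * n : ℕ) : ℤ) := by rw [hsum]
    show ∑ i : Fin k, (((l : ℕ →₀ ℕ) i : ℤ) - n) = 0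
    rw [Finset.sum_sub_distrib, hs, Finset.sum_const, Finset.card_univ, Fintype.card_fin]
    push_cast
    ring
  · -- left inverse
    rintro ⟨Δ, h1, h2⟩
    ext i
    simp only
    rw [toL_apply]
    have : (0 : ℤ) ≤ Δ i + n := by have := (abs_le.mp (h1 i)).1; linarith
    rw [Int.toNat_of_nonneg this]
    ring
  · -- right inverse
    rintro ⟨l, hl⟩
    ext x
    simp only
    by_cases hx : x < k
    · have : toL k n _ x = _ := toL_apply k n (fun i => ((l i : ℤ)) - n) ⟨x, hx⟩
      rw [this]
      simp only [Fin.val_mk]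
      omega
    · obtain ⟨hmem, hb⟩ := Finset.mem_filter.mp hl
      obtain ⟨hsum, hsupp⟩ := Finset.mem_finsuppAntidiag.mp hmem
      have h0 : l x = 0 := by
        by_contra hc
        exact hx (Finset.mem_range.mp (hsupp (Finsupp.mem_support_iff.mpr hc)))
      have : toL k n (fun i => ((l i : ℤ)) - n) x = 0 := by
        simp [toL, hx]
      rw [this, h0]
lemma coeff_formula (k n : ℕ) (hk : 1 ≤ k) :
    PowerSeries.coeff (R := ℤ) (k*n) ((∑ i ∈ Finset.range (2*n+1), (PowerSeries.X : ℤ⟦X⟧) ^ i) ^ k) =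
    ∑ j ∈ Finset.range (k+1), (-1:ℤ)^j * (Nat.choose k j : ℤ) *
      (if (2*n+1)*j ≤ k*n
        then ((Nat.choose (k - 1 + (k*n - (2*n+1)*j)) (k-1) : ℕ) : ℤ) else 0) := by
  set m := 2*n+1 with hm
  set p : ℤ⟦X⟧ := ∑ i ∈ Finset.range m, (PowerSeries.X : ℤ⟦X⟧) ^ i with hp
  have hgeom : p * (1 - X) = 1 - X ^ m := by
    have h := geom_sum_mul (PowerSeries.X : ℤ⟦X⟧) m
    rw [hp]
    linear_combination -h
  have hpow : p ^ k = (1 - X ^ m) ^ k * (invOneSubPow ℤ k).val := by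
    calc p ^ k = p ^ k * ((invOneSubPow ℤ k).inv * (invOneSubPow ℤ k).val) := by
          rw [(invOneSubPow ℤ k).inv_val, mul_one]
      _ = (p * (1 - X)) ^ k * (invOneSubPow ℤ k).val := by
          rw [invOneSubPow_inv_eq_one_sub_pow, ← mul_assoc, ← mul_pow]
      _ = (1 - X ^ m) ^ k * (invOneSubPow ℤ k).val := by rw [hgeom]
  have hexp : ((1 : ℤ⟦X⟧) - X ^ m) ^ k =
      ∑ j ∈ Finset.range (k+1),
        PowerSeries.C (R := ℤ) ((-1)^j * (Nat.choose k j : ℤ)) * X ^ (m*j) := by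
    rw [sub_eq_add_neg, add_comm, add_pow]
    refine Finset.sum_congr rfl fun j hj => ?_
    rw [neg_pow, one_pow, map_mul, map_pow, map_neg, map_one, map_natCast, pow_mul]
    ring
  rw [hpow, hexp, Finset.sum_mul, map_sum]
  refine Finset.sum_congr rfl fun j hj => ?_
  rw [mul_assoc, PowerSeries.coeff_C_mul, PowerSeries.coeff_X_pow_mul',
    invOneSubPow_val_eq_mk_sub_one_add_choose_of_pos ℤ k hk, PowerSeries.coeff_mk]
private lemma aux_factor (c : ℝ) (a : ℕ) :
    Filter.Tendsto (fun n : ℕ => ((a:ℝ)*n + c)/n) Filter.atTop (nhds (a : ℝ)) := by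
  have h : Filter.Tendsto (fun n : ℕ => (a:ℝ) + c*(1/n)) Filter.atTop
      (nhds ((a:ℝ) + c*0)) :=
    tendsto_const_nhds.add (tendsto_one_div_atTop_nhds_zero_nat.const_mul c)
  rw [mul_zero, add_zero] at h
  apply h.congr'
  filter_upwards [Filter.eventually_ge_atTop 1] with n hn
  have hn0 : (n:ℝ) ≠ 0 := by
    have : (1:ℝ) ≤ n := by exact_mod_cast hn
    linarith
  field_simp

private lemma choose_cast_prod (r M : ℕ) :
    ((Nat.choose (r + M) r : ℕ) : ℝ) = (∏ i ∈ Finset.range r, ((r:ℝ) + M - i)) / r ! := by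
  rw [eq_div_iff (by exact_mod_cast (Nat.factorial_ne_zero r))]
  have h := Nat.descFactorial_eq_factorial_mul_choose (r + M) r
  rw [Nat.descFactorial_eq_prod_range] at h
  have := congrArg (fun x : ℕ => (x : ℝ)) h
  simp only [Nat.cast_prod, Nat.cast_mul] at this
  rw [mul_comm] at this
  rw [← this]
  refine Finset.prod_congr rfl fun i hi => ?_
  have hi' : i < r := Finset.mem_range.mp hi
  have : i ≤ r + M := by omega
  push_cast [Nat.cast_sub this]
  ring

private lemma tendsto_term_lt (k j : ℕ) (h2 : 2*j < k) :
    Filter.Tendsto (fun n : ℕ =>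
      ((if (2*n+1)*j ≤ k*n
        then ((Nat.choose (k - 1 + (k*n - (2*n+1)*j)) (k-1) : ℕ) : ℝ) else 0)) / (n:ℝ)^(k-1))
      Filter.atTop (nhds (((k - 2*j : ℕ):ℝ)^(k-1) / (k-1)!)) := by
  set a := k - 2*j with ha
  set r := k - 1 with hr
  have haR : ((a:ℕ):ℝ) = (k:ℝ) - 2*j := by
    rw [ha]; push_cast [Nat.cast_sub (by omega : 2*j ≤ k)]; ring
  have main : Filter.Tendsto (fun n : ℕ =>
      (∏ i ∈ Finset.range r, (((a:ℝ)*n + ((r:ℝ)-(j:ℝ)-(i:ℝ)))/n)) / (r ! : ℝ))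
      Filter.atTop (nhds (((a:ℕ):ℝ)^r / r !)) := by
    have hp : Filter.Tendsto (fun n : ℕ =>
        ∏ i ∈ Finset.range r, (((a:ℝ)*n + ((r:ℝ)-(j:ℝ)-(i:ℝ)))/n))
        Filter.atTop (nhds (∏ _i ∈ Finset.range r, ((a:ℕ):ℝ))) :=
      tendsto_finset_prod _ (fun i _ => aux_factor ((r:ℝ)-(j:ℝ)-(i:ℝ)) a)
    rw [Finset.prod_const, Finset.card_range] at hp
    exact hp.div_const _
  apply main.congr'
  filter_upwards [Filter.eventually_ge_atTop (j+1)] with n hn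
  have hjn : j ≤ n := by omega
  have hcond : (2*n+1)*j ≤ k*n := by
    calc (2*n+1)*j = 2*j*n + j := by ring
      _ ≤ (k-1)*n + n := by
          gcongr
          · omega
      _ ≤ k*n := by
          rw [Nat.sub_mul]
          have : n ≤ k * n := Nat.le_mul_of_pos_left n (by omega)
          omega
  have hn0 : (n:ℝ) ≠ 0 := by
    have : (1:ℝ) ≤ (n:ℝ) := by exact_mod_cast (by omega : 1 ≤ n)
    linarith
  have hD : ((k*n - (2*n+1)*j : ℕ) : ℝ) = (a:ℝ)*n - j := by
    rw [Nat.cast_sub hcond, haR]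
    push_cast
    ring
  rw [if_pos hcond, choose_cast_prod, hD]
  rw [Finset.prod_div_distrib]
  rw [Finset.prod_const, Finset.card_range]
  rw [div_div, div_div, mul_comm ((n:ℝ)^r) ((r ! : ℝ))]
  have hpr : (∏ i ∈ Finset.range r, (((a:ℝ)*n + ((r:ℝ)-(j:ℝ)-(i:ℝ))))) =
      ∏ i ∈ Finset.range r, ((r:ℝ) + ((a:ℝ)*(n:ℝ) - (j:ℝ)) - (i:ℝ)) :=
    Finset.prod_congr rfl (fun i _ => by ring)
  rw [hpr]

private lemma tendsto_term_ge (k j : ℕ) (h1 : 1 ≤ j) (h2 : k ≤ 2*j) :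
    Filter.Tendsto (fun n : ℕ =>
      ((if (2*n+1)*j ≤ k*n
        then ((Nat.choose (k - 1 + (k*n - (2*n+1)*j)) (k-1) : ℕ) : ℝ) else 0)) / (n:ℝ)^(k-1))
      Filter.atTop (nhds 0) := by
  have : ∀ n : ℕ, ¬ ((2*n+1)*j ≤ k*n) := by
    intro n hc
    have : k*n ≤ 2*j*n := Nat.mul_le_mul_right n h2
    have h3 : (2*n+1)*j = 2*j*n + j := by ring
    omega
  simp only [this, if_false]
  simpa using tendsto_const_nhds (x := (0:ℝ)) (f := Filter.atTop (α := ℕ))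

private lemma card_eq_coeff (k n : ℕ) :
    ((Nat.card {Δ : Fin k → ℤ // (∀ i, |Δ i| ≤ (n : ℤ)) ∧ ∑ i, Δ i = 0} : ℤ)) =
    PowerSeries.coeff (R := ℤ) (k * n)
      ((∑ i ∈ Finset.range (2*n+1), (PowerSeries.X : ℤ⟦X⟧) ^ i) ^ k) := by
  rw [card_eq_filter k n, PowerSeries.coeff_pow]
  simp_rw [coeff_geom]
  rw [Finset.sum_congr rfl (fun l _ => Finset.prod_boole (p := fun i => l i < 2*n+1))]
  rw [Finset.sum_boole]

/-- asymptotics of `Z(n,…,n)/n^(k-1)`. -/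
theorem stmt_9 (k : ℕ) (hk : 1 ≤ k) :
    Filter.Tendsto (fun n : ℕ =>
      (Nat.card {Δ : Fin k → ℤ // (∀ i, |Δ i| ≤ (n : ℤ)) ∧ ∑ i, Δ i = 0} : ℝ) /
        (n : ℝ) ^ (k - 1))
      Filter.atTop
      (nhds ((1 / (Nat.factorial (k - 1) : ℝ)) * ∑ j ∈ Finset.range (k / 2 + 1),
        (-1 : ℝ) ^ j * (Nat.choose k j : ℝ) * ((k : ℝ) - 2 * j) ^ (k - 1))) := by
  have key : ∀ n : ℕ,
      (Nat.card {Δ : Fin k → ℤ // (∀ i, |Δ i| ≤ (n : ℤ)) ∧ ∑ i, Δ i = 0} : ℝ) =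
      ∑ j ∈ Finset.range (k+1), ((-1:ℝ)^j * (Nat.choose k j : ℝ) *
        (if (2*n+1)*j ≤ k*n
          then ((Nat.choose (k - 1 + (k*n - (2*n+1)*j)) (k-1) : ℕ) : ℝ) else 0)) := by
    intro n
    have h1 := (card_eq_coeff k n).trans (coeff_formula k n hk)
    have h2 := congrArg (fun z : ℤ => (z : ℝ)) h1
    rw [show ((Nat.card {Δ : Fin k → ℤ // (∀ i, |Δ i| ≤ (n : ℤ)) ∧ ∑ i, Δ i = 0} : ℕ) : ℝ)
        = (((Nat.card {Δ : Fin k → ℤ // (∀ i, |Δ i| ≤ (n : ℤ)) ∧ ∑ i, Δ i = 0} : ℕ) : ℤ) : ℝ)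
      by push_cast; rfl]
    rw [h2]
    push_cast [apply_ite (fun z : ℤ => (z : ℝ))]
    rfl
  have heq : (fun n : ℕ =>
      (Nat.card {Δ : Fin k → ℤ // (∀ i, |Δ i| ≤ (n : ℤ)) ∧ ∑ i, Δ i = 0} : ℝ) /
        (n : ℝ) ^ (k - 1)) =
      (fun n : ℕ => ∑ j ∈ Finset.range (k+1), ((-1:ℝ)^j * (Nat.choose k j : ℝ) *
        (if (2*n+1)*j ≤ k*n
          then ((Nat.choose (k - 1 + (k*n - (2*n+1)*j)) (k-1) : ℕ) : ℝ) else 0)) /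
          (n:ℝ)^(k-1)) := by
    funext n
    rw [key n, Finset.sum_div]
  rw [heq]
  have hlim : ∀ j ∈ Finset.range (k+1),
      Filter.Tendsto (fun n : ℕ => ((-1:ℝ)^j * (Nat.choose k j : ℝ) *
        (if (2*n+1)*j ≤ k*n
          then ((Nat.choose (k - 1 + (k*n - (2*n+1)*j)) (k-1) : ℕ) : ℝ) else 0)) /
          (n:ℝ)^(k-1))
        Filter.atTop (nhds ((-1:ℝ)^j * (Nat.choose k j : ℝ) *
          (if 2*j < k then ((k - 2*j : ℕ):ℝ)^(k-1) / (k-1)! else 0))) := by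
    intro j _
    simp_rw [mul_div_assoc]
    by_cases h : 2*j < k
    · rw [if_pos h]
      exact (tendsto_term_lt k j h).const_mul _
    · rw [if_neg h, mul_zero]
      have h1j : 1 ≤ j := by omega
      have := (tendsto_term_ge k j h1j (by omega)).const_mul ((-1:ℝ)^j * (Nat.choose k j : ℝ))
      simpa using this
  have := tendsto_finset_sum (Finset.range (k+1)) hlim
  convert this using 2
  -- sum identity
  have hsub : Finset.range (k/2+1) ⊆ Finset.range (k+1) :=
    Finset.range_subset_range.mpr (by omega)
  rw [Finset.mul_sum, ← Finset.sum_subset hsub (fun j hj hj2 => ?_)]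
  · refine Finset.sum_congr rfl fun j hj => ?_
    have hjk : j ≤ k/2 := by
      have := Finset.mem_range.mp hj; omega
    by_cases h : 2*j < k
    · rw [if_pos h]
      have hc : ((k - 2*j : ℕ):ℝ) = (k:ℝ) - 2*j := by
        push_cast [Nat.cast_sub (by omega : 2*j ≤ k)]; ring
      rw [hc]
      ring
    · have h2 : 2*j = k := by omega
      rw [if_neg h, mul_zero]
      have : (k:ℝ) - 2*j = 0 := by
        rw [← h2]; push_cast; ring
      rw [this, zero_pow (by omega : k - 1 ≠ 0)]
      ring
  · -- terms outside range (k/2+1) vanish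
    have : ¬ 2*j < k := by
      have := Finset.mem_range.mp hj
      have h2 : ¬ j < k/2 + 1 := fun hc => hj2 (Finset.mem_range.mpr hc)
      omega
    rw [if_neg this, mul_zero]
end
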